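/- arXiv:1608.00800 — 3 statements merged into one kernel-verified Lean document; each statement's English description precedes it below -/
import Mathlib

section
/- (Martingale concentration, Chung–Lu type.) Let m_0 ∈ ℝ and let M_0 = m_0, M_1, …, M_k be a martingale with respect to its natural filtration F_i = σ(M_0,…,M_i) such that for each 1 ≤ i ≤ k: (i) |M_i − M_{i−1}| ≤ m for some m > 0, and (ii) the conditional variance satisfies Var[M_i | F_{i−1}] = E[(M_i − E[M_i | F_{i−1}])² | F_{i−1}] ≤ σ_i² for some real σ_i. Then for any λ > 0, P[M_k − m_0 ≥ λ] ≤ exp(−λ² / (2(Σ_{i=1}^k σ_i² + mλ/3))). -/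
open MeasureTheory Filter

section ChungLuAux
open Real

private lemma exp_sub_eq_tsum (x : ℝ) :
    Real.exp x - 1 - x = ∑' n : ℕ, x ^ (n + 2) / (n + 2).factorial := by
  have h2 : Real.exp x = ∑' n : ℕ, x ^ n / n.factorial := by
    rw [Real.exp_eq_exp_ℝ, NormedSpace.exp_eq_tsum_div]
  have hs : Summable (fun n : ℕ => x ^ n / n.factorial) := Real.summable_pow_div_factorial x
  have h0 := Summable.tsum_eq_zero_add hs
  have hs1 : Summable (fun n : ℕ => x ^ (n + 1) / (n + 1).factorial) :=
    (summable_nat_add_iff 1).mpr hs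
  have h1 := Summable.tsum_eq_zero_add hs1
  rw [h2, h0, h1]
  norm_num [Nat.factorial_one]

private lemma summable_shift2 (x : ℝ) : Summable (fun n : ℕ => x ^ (n + 2) / (n + 2).factorial) :=
  (summable_nat_add_iff 2).mpr (Real.summable_pow_div_factorial x)

-- L2 : monotonicity on nonneg reals
private lemma mono_aux {x u : ℝ} (hx : 0 ≤ x) (hxu : x ≤ u) :
    (Real.exp x - 1 - x) * u ^ 2 ≤ (Real.exp u - 1 - u) * x ^ 2 := by
  rw [exp_sub_eq_tsum, exp_sub_eq_tsum, ← tsum_mul_right, ← tsum_mul_right]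
  have hu : 0 ≤ u := hx.trans hxu
  refine Summable.tsum_le_tsum (fun n => ?_) ((summable_shift2 x).mul_right _)
    ((summable_shift2 u).mul_right _)
  rw [div_mul_eq_mul_div, div_mul_eq_mul_div]
  apply div_le_div_of_nonneg_right ?_ (by positivity)
  · calc x ^ (n + 2) * u ^ 2 = x ^ n * (x * u) ^ 2 := by ring
      _ ≤ u ^ n * (x * u) ^ 2 := by
          apply mul_le_mul_of_nonneg_right (pow_le_pow_left₀ hx hxu n) (by positivity)
      _ = u ^ (n + 2) * x ^ 2 := by ring

-- L3 : geometric bound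
private lemma geom_aux {u : ℝ} (hu : 0 ≤ u) (hu3 : u < 3) :
    Real.exp u - 1 - u ≤ u ^ 2 / (2 * (1 - u / 3)) := by
  have hfact : ∀ n : ℕ, (2 * 3 ^ n : ℝ) ≤ (n + 2).factorial := by
    intro n
    induction n with
    | zero => norm_num
    | succ n ih =>
      have : ((n + 3).factorial : ℝ) = (n + 3) * (n + 2).factorial := by
        rw [show n + 3 = (n + 2) + 1 from rfl, Nat.factorial_succ]; push_cast; ring
      calc (2 * 3 ^ (n+1) : ℝ) = 3 * (2 * 3 ^ n) := by ring
        _ ≤ 3 * (n + 2).factorial := by linarith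
        _ ≤ (n + 3) * (n + 2).factorial := by
            have : (0:ℝ) ≤ (n + 2).factorial := by positivity
            nlinarith [Nat.cast_nonneg (α := ℝ) n]
        _ = (n + 3).factorial := this.symm
  rw [exp_sub_eq_tsum]
  have hr : u / 3 < 1 := by linarith
  have hr0 : 0 ≤ u / 3 := by linarith
  have hgs : Summable (fun n : ℕ => u ^ 2 / 2 * (u / 3) ^ n) :=
    (summable_geometric_of_lt_one hr0 hr).mul_left _
  have := Summable.tsum_le_tsum (f := fun n : ℕ => u ^ (n + 2) / (n + 2).factorial)
    (g := fun n : ℕ => u ^ 2 / 2 * (u / 3) ^ n) ?_ (summable_shift2 u) hgs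
  · refine this.trans (le_of_eq ?_)
    have hne : (1 : ℝ) - u / 3 ≠ 0 := by linarith
    rw [tsum_mul_left, tsum_geometric_of_lt_one hr0 hr]
    field_simp
  · intro n
    have h1 : (0:ℝ) < (n + 2).factorial := by positivity
    rw [div_le_iff₀ h1]
    calc u ^ (n + 2) = u ^ 2 / 2 * (u / 3) ^ n * (2 * 3 ^ n) := by
          rw [div_pow]; field_simp; ring
      _ ≤ u ^ 2 / 2 * (u / 3) ^ n * (n + 2).factorial :=
          mul_le_mul_of_nonneg_left (hfact n) (by positivity)

-- L5
private lemma quad_le_exp {u : ℝ} (hu : 0 ≤ u) : u ^ 2 / 2 ≤ Real.exp u - 1 - u := by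
  rw [exp_sub_eq_tsum]
  have h := Summable.le_tsum (summable_shift2 u) 0 (fun i _ => by positivity)
  simpa using h

-- L4
private lemma exp_le_quad {x : ℝ} (hx : x ≤ 0) : Real.exp x - 1 - x ≤ x ^ 2 / 2 := by
  have hd : ∀ y : ℝ, HasDerivAt (fun y : ℝ => 1 + y + y ^ 2 / 2 - Real.exp y)
      (1 + y - Real.exp y) y := by
    intro y
    have h1 : HasDerivAt (fun y : ℝ => 1 + y) 1 y := (hasDerivAt_id y).const_add 1
    have h2 : HasDerivAt (fun y : ℝ => y ^ 2 / 2) y y := by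
      simpa using (hasDerivAt_pow 2 y).div_const 2
    exact (h1.add h2).sub (Real.hasDerivAt_exp y)
  have hmono : Antitone (fun y : ℝ => 1 + y + y ^ 2 / 2 - Real.exp y) := by
    apply antitone_of_deriv_nonpos
    · exact fun y => (hd y).differentiableAt
    · intro y
      rw [(hd y).deriv]
      have := Real.add_one_le_exp y
      linarith
  have := hmono hx
  simp only [Real.exp_zero] at this
  norm_num at this
  linarith

-- KEY
private lemma key_ineq {x u : ℝ} (hu : 0 < u) (hx : |x| ≤ u) :
    Real.exp x ≤ 1 + x + x ^ 2 * ((Real.exp u - 1 - u) / u ^ 2) := by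
  have hu2 : (0:ℝ) < u ^ 2 := by positivity
  have hh : (1:ℝ)/2 ≤ (Real.exp u - 1 - u) / u ^ 2 := by
    rw [le_div_iff₀ hu2]
    have := quad_le_exp hu.le
    linarith
  rcases le_or_gt 0 x with hx0 | hx0
  · have := mono_aux hx0 ((le_abs_self x).trans hx)
    have h2 : Real.exp x - 1 - x ≤ x ^ 2 * ((Real.exp u - 1 - u) / u ^ 2) := by
      rw [mul_div_assoc']
      rw [le_div_iff₀ hu2]
      linarith
    linarith
  · have h1 := exp_le_quad hx0.le
    nlinarith [sq_nonneg x]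

end ChungLuAux

/-- **Martingale concentration (Chung–Lu type).** Let `M_0 = m_0, M_1, …, M_k` be a
martingale with respect to its natural filtration `F_i = σ(M_0,…,M_i)` such that for each
`1 ≤ i ≤ k` the differences satisfy `|M_i - M_{i-1}| ≤ b` and the conditional variance
satisfies `Var[M_i | F_{i-1}] ≤ σ_i²`. Then for any `λ > 0`,
`P[M_k - m_0 ≥ λ] ≤ exp(-λ² / (2(Σ σ_i² + bλ/3)))`. -/
theorem martingale_concentration {Ω : Type*} [m : MeasurableSpace Ω]
    (μ : Measure Ω) [IsProbabilityMeasure μ]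
    (k : ℕ) (M : ℕ → Ω → ℝ) (m0 : ℝ) (hM0 : ∀ ω, M 0 ω = m0)
    -- `F` is the natural filtration of the sequence `M`
    (F : ℕ → MeasurableSpace Ω)
    (hF : ∀ i, F i = ⨆ j ∈ Set.Iic i, MeasurableSpace.comap (M j)
      (inferInstance : MeasurableSpace ℝ))
    (hFm : ∀ i, F i ≤ m)
    (hInt : ∀ i, Integrable (M i) μ)
    -- the martingale property
    (hmart : ∀ i, 1 ≤ i → i ≤ k → condExp (F (i - 1)) μ (M i) =ᵐ[μ] M (i - 1))
    -- (i) bounded differences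
    (b : ℝ) (hb : 0 < b)
    (hdiff : ∀ i, 1 ≤ i → i ≤ k → ∀ ω, |M i ω - M (i - 1) ω| ≤ b)
    -- (ii) bounded conditional variance
    (σ : ℕ → ℝ)
    (hvar : ∀ i, 1 ≤ i → i ≤ k →
      condExp (F (i - 1)) μ (fun ω => (M i ω - condExp (F (i - 1)) μ (M i) ω) ^ 2)
        ≤ᵐ[μ] fun _ => σ i ^ 2)
    (lam : ℝ) (hlam : 0 < lam) :
    μ {ω | lam ≤ M k ω - m0} ≤
      ENNReal.ofReal (Real.exp (-(lam ^ 2) /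
        (2 * ((∑ i ∈ Finset.Icc 1 k, σ i ^ 2) + b * lam / 3)))) := by
  -- measurability facts
  have hMF : ∀ i j, j ≤ i → Measurable[F i] (M j) := by
    intro i j hj
    rw [measurable_iff_comap_le, hF i]
    exact le_iSup₂ (f := fun j (_ : j ∈ Set.Iic i) =>
      MeasurableSpace.comap (M j) inferInstance) j (Set.mem_Iic.mpr hj)
  have hMm : ∀ i, Measurable (M i) := fun i => (hMF i i le_rfl).mono (hFm i) le_rfl
  -- boundedness by telescoping
  have hMb : ∀ i, i ≤ k → ∀ ω, |M i ω - m0| ≤ i * b := by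
    intro i
    induction i with
    | zero => intro _ ω; simp [hM0 ω]
    | succ i ih =>
      intro hik ω
      have h1 : 1 ≤ i + 1 := Nat.succ_le_succ (Nat.zero_le i)
      have hd := hdiff (i + 1) h1 hik ω
      simp only [Nat.add_sub_cancel] at hd
      have := ih (le_trans (Nat.le_succ i) hik) ω
      calc |M (i + 1) ω - m0| ≤ |M (i + 1) ω - M i ω| + |M i ω - m0| := by
            have := abs_add_le (M (i + 1) ω - M i ω) (M i ω - m0); simpa using this
        _ ≤ b + i * b := add_le_add hd this
        _ = (i + 1 : ℕ) * b := by push_cast; ring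
  -- integrability of bounded measurable functions
  have hbdd_int : ∀ (f : Ω → ℝ) (C : ℝ), Measurable f → (∀ ω, |f ω| ≤ C) →
      Integrable f μ := by
    intro f C hf hC
    exact ⟨hf.aestronglyMeasurable,
      HasFiniteIntegral.of_bounded (C := C) (Eventually.of_forall fun ω => by
        simpa using hC ω)⟩
  -- constants
  set V : ℝ := ∑ i ∈ Finset.Icc 1 k, σ i ^ 2 with hV
  have hV0 : 0 ≤ V := Finset.sum_nonneg fun i _ => sq_nonneg _
  have hden : 0 < V + b * lam / 3 := by positivity
  clear_value V
  set t : ℝ := lam / (V + b * lam / 3) with ht_def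
  have ht : 0 < t := div_pos hlam hden
  clear_value t
  set u0 : ℝ := t * b with hu0_def
  clear_value u0
  have hu0 : 0 < u0 := by rw [hu0_def]; exact mul_pos ht hb
  set h : ℝ := (Real.exp u0 - 1 - u0) / u0 ^ 2 with hh_def
  clear_value h
  have hh2 : (1 : ℝ) / 2 ≤ h := by
    rw [hh_def, le_div_iff₀ (by positivity)]
    have := quad_le_exp hu0.le
    linarith
  have hh0 : 0 ≤ h := le_trans (by norm_num) hh2
  -- the exponential of each increment is integrable etc.
  have hGmeas : ∀ i, Measurable fun ω => Real.exp (t * (M i ω - m0)) :=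
    fun i => Real.measurable_exp.comp (((hMm i).sub measurable_const).const_mul t)
  have hGb : ∀ i, i ≤ k → ∀ ω, |Real.exp (t * (M i ω - m0))| ≤ Real.exp (t * (i * b)) := by
    intro i hik ω
    rw [abs_of_pos (Real.exp_pos _), Real.exp_le_exp]
    exact mul_le_mul_of_nonneg_left (le_trans (le_abs_self _) (hMb i hik ω)) ht.le
  have hGint : ∀ i, i ≤ k → Integrable (fun ω => Real.exp (t * (M i ω - m0))) μ :=
    fun i hik => hbdd_int _ _ (hGmeas i) (hGb i hik)
  -- main induction
  have key : ∀ i, i ≤ k → ∫ ω, Real.exp (t * (M i ω - m0)) ∂μ ≤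
      Real.exp (h * t ^ 2 * ∑ j ∈ Finset.Icc 1 i, σ j ^ 2) := by
    intro i
    induction i with
    | zero =>
      intro _
      simp [hM0, measure_univ]
    | succ i ih =>
      intro hik
      have hik' : i ≤ k := le_trans (Nat.le_succ i) hik
      have h1 : 1 ≤ i + 1 := Nat.succ_le_succ (Nat.zero_le i)
      have hle := hFm i
      have hmart' : condExp (F i) μ (M (i + 1)) =ᵐ[μ] M i := by
        have := hmart (i + 1) h1 hik; simpa using this
      set X : Ω → ℝ := fun ω => M (i + 1) ω - M i ω with hXdef
      have hXb : ∀ ω, |X ω| ≤ b := by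
        intro ω; have := hdiff (i + 1) h1 hik ω; simpa using this
      have hXm : Measurable X := (hMm (i + 1)).sub (hMm i)
      have hXint : Integrable X μ := hbdd_int X b hXm hXb
      have hX2int : Integrable (fun ω => X ω ^ 2) μ :=
        hbdd_int _ (b ^ 2) (hXm.pow_const 2) (fun ω => by
          rw [abs_pow]
          exact pow_le_pow_left₀ (abs_nonneg _) (hXb ω) 2)
      set G : Ω → ℝ := fun ω => Real.exp (t * (M i ω - m0)) with hGdef
      set E : Ω → ℝ := fun ω => Real.exp (t * X ω) with hEdef
      have hGsm : StronglyMeasurable[F i] G :=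
        (Real.measurable_exp.comp (((hMF i i le_rfl).sub measurable_const).const_mul
          t)).stronglyMeasurable
      have hEint : Integrable E μ := hbdd_int E (Real.exp (t * b))
        (Real.measurable_exp.comp (hXm.const_mul t)) (fun ω => by
          rw [abs_of_pos (Real.exp_pos _), Real.exp_le_exp]
          exact mul_le_mul_of_nonneg_left (le_trans (le_abs_self _) (hXb ω)) ht.le)
      have hprod : (fun ω => Real.exp (t * (M (i + 1) ω - m0))) = fun ω => G ω * E ω := by
        funext ω
        rw [hGdef, hEdef, ← Real.exp_add]
        congr 1
        simp only [hXdef]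
        ring
      have hprod_int : Integrable (fun ω => G ω * E ω) μ := by
        rw [← hprod]; exact hGint (i + 1) hik
      -- pointwise bound on E
      have hEptw : ∀ ω, E ω ≤ 1 + t * X ω + (h * t ^ 2) * X ω ^ 2 := by
        intro ω
        have habs : |t * X ω| ≤ u0 := by
          rw [hu0_def, abs_mul, abs_of_pos ht]
          exact mul_le_mul_of_nonneg_left (hXb ω) ht.le
        have := key_ineq hu0 habs
        rw [← hh_def] at this
        calc E ω ≤ 1 + t * X ω + (t * X ω) ^ 2 * h := this
          _ = 1 + t * X ω + (h * t ^ 2) * X ω ^ 2 := by ring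
      -- conditional expectation of X is 0
      have hcondX : condExp (F i) μ X =ᵐ[μ] fun _ => (0 : ℝ) := by
        have h1' := condExp_sub (m := F i) (μ := μ) (hInt (i + 1)) (hInt i)
        have h2' : condExp (F i) μ (M i) = M i :=
          condExp_of_stronglyMeasurable hle (hMF i i le_rfl).stronglyMeasurable (hInt i)
        filter_upwards [h1', hmart'] with ω hω1 hω2
        show (condExp (F i) μ (fun ω => M (i + 1) ω - M i ω)) ω = 0
        rw [show (fun ω => M (i + 1) ω - M i ω) = M (i + 1) - M i from rfl, hω1]
        simp [h2', hω2]
      -- conditional second moment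
      have hcondX2 : condExp (F i) μ (fun ω => X ω ^ 2) ≤ᵐ[μ] fun _ => σ (i + 1) ^ 2 := by
        have hvv := hvar (i + 1) h1 hik
        simp only [Nat.add_sub_cancel] at hvv
        have hcongr : (fun ω => (M (i + 1) ω - condExp (F i) μ (M (i + 1)) ω) ^ 2)
            =ᵐ[μ] fun ω => X ω ^ 2 := by
          filter_upwards [hmart'] with ω hω
          simp [hXdef, hω]
        exact (condExp_congr_ae hcongr).symm.trans_le hvv
      -- bound the conditional expectation of E
      have hRint : Integrable (fun ω => 1 + t * X ω + (h * t ^ 2) * X ω ^ 2) μ :=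
        ((integrable_const 1).add (hXint.const_mul t)).add (hX2int.const_mul _)
      have hcondE : condExp (F i) μ E ≤ᵐ[μ]
          fun _ => Real.exp (h * t ^ 2 * σ (i + 1) ^ 2) := by
        have hsum_int : Integrable (t • X + (h * t ^ 2) • fun ω => X ω ^ 2) μ :=
          (hXint.smul t).add (hX2int.smul (h * t ^ 2))
        have hR_eq : (fun ω => 1 + t * X ω + (h * t ^ 2) * X ω ^ 2)
            = (fun _ => (1 : ℝ)) + (t • X + (h * t ^ 2) • fun ω => X ω ^ 2) := by
          funext ω
          simp only [Pi.add_apply, Pi.smul_apply, smul_eq_mul]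
          ring
        have e2 := condExp_add (m := F i) (μ := μ) (integrable_const (1 : ℝ)) hsum_int
        have e3 := condExp_add (m := F i) (μ := μ) (hXint.smul t) (hX2int.smul (h * t ^ 2))
        have e4 := condExp_smul (m := F i) (μ := μ) t X
        have e5 := condExp_smul (m := F i) (μ := μ) (h * t ^ 2) (fun ω => X ω ^ 2)
        have hc1 : condExp (F i) μ (fun _ => (1 : ℝ)) = fun _ => 1 := condExp_const hle 1
        have step1 := condExp_mono (m := F i) hEint hRint (Eventually.of_forall hEptw)
        rw [hR_eq] at step1
        filter_upwards [step1, e2, e3, e4, e5, hcondX, hcondX2] with ω hs he2 he3 he4 he5 hX0 hX2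
        have heq : (condExp (F i) μ ((fun _ => (1 : ℝ)) +
            (t • X + (h * t ^ 2) • fun ω => X ω ^ 2))) ω
            = 1 + t * (condExp (F i) μ X) ω
              + (h * t ^ 2) * (condExp (F i) μ (fun ω => X ω ^ 2)) ω := by
          rw [he2, Pi.add_apply, he3, Pi.add_apply, he4, he5, Pi.smul_apply, Pi.smul_apply,
            smul_eq_mul, smul_eq_mul, hc1]
          ring
        rw [heq, hX0] at hs
        have hbd : (h * t ^ 2) * (condExp (F i) μ (fun ω => X ω ^ 2)) ω
            ≤ (h * t ^ 2) * σ (i + 1) ^ 2 :=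
          mul_le_mul_of_nonneg_left hX2 (by positivity)
        have hexp := Real.add_one_le_exp (h * t ^ 2 * σ (i + 1) ^ 2)
        simp only [mul_zero, add_zero] at hs
        calc (condExp (F i) μ E) ω ≤ 1 + (h * t ^ 2) * (condExp (F i) μ (fun ω => X ω ^ 2)) ω := hs
          _ ≤ 1 + (h * t ^ 2) * σ (i + 1) ^ 2 := by linarith
          _ ≤ Real.exp (h * t ^ 2 * σ (i + 1) ^ 2) := by linarith
      -- put everything together
      set C2 : ℝ := Real.exp (h * t ^ 2 * σ (i + 1) ^ 2) with hC2
      have hpull : condExp (F i) μ (fun ω => G ω * E ω) =ᵐ[μ] fun ω => G ω * (condExp (F i) μ E) ω := by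
        have := condExp_mul_of_stronglyMeasurable_left (μ := μ) hGsm
          (show Integrable (G * E) μ from hprod_int) hEint
        filter_upwards [this] with ω hω
        exact hω
      have hint1 : Integrable (fun ω => G ω * (condExp (F i) μ E) ω) μ :=
        (integrable_condExp).bdd_mul (c := Real.exp (t * (i * b))) ((hGmeas i).aestronglyMeasurable)
          (Eventually.of_forall fun ω => by
            rw [Real.norm_eq_abs]; exact hGb i hik' ω)
      have hint2 : Integrable (fun ω => G ω * C2) μ := (hGint i hik').mul_const _
      have hGnn : ∀ ω, 0 ≤ G ω := fun ω => (Real.exp_pos _).le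
      calc ∫ ω, Real.exp (t * (M (i + 1) ω - m0)) ∂μ
          = ∫ ω, G ω * E ω ∂μ := by rw [hprod]
        _ = ∫ ω, (condExp (F i) μ (fun ω => G ω * E ω)) ω ∂μ :=
            (integral_condExp hle).symm
        _ = ∫ ω, G ω * (condExp (F i) μ E) ω ∂μ := integral_congr_ae hpull
        _ ≤ ∫ ω, G ω * C2 ∂μ := by
            refine integral_mono_ae hint1 hint2 ?_
            filter_upwards [hcondE] with ω hω
            exact mul_le_mul_of_nonneg_left hω (hGnn ω)
        _ = (∫ ω, G ω ∂μ) * C2 := integral_mul_const C2 G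
        _ ≤ Real.exp (h * t ^ 2 * ∑ j ∈ Finset.Icc 1 i, σ j ^ 2) * C2 := by
            have := ih hik'
            exact mul_le_mul_of_nonneg_right this (Real.exp_pos _).le
        _ = Real.exp (h * t ^ 2 * ∑ j ∈ Finset.Icc 1 (i + 1), σ j ^ 2) := by
            rw [hC2, ← Real.exp_add, Finset.sum_Icc_succ_top h1]
            congr 1
            ring
  -- Chernoff bound
  have hchern := ProbabilityTheory.measure_ge_le_exp_mul_mgf (μ := μ)
    (X := fun ω => M k ω - m0) lam ht.le (hGint k le_rfl)
  have hmgf : ProbabilityTheory.mgf (fun ω => M k ω - m0) μ t ≤ Real.exp (h * t ^ 2 * V) := by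
    rw [hV]
    exact key k le_rfl
  have hfinal : Real.exp (-t * lam) * ProbabilityTheory.mgf (fun ω => M k ω - m0) μ t
      ≤ Real.exp (-(lam ^ 2) / (2 * (V + b * lam / 3))) := by
    have step : Real.exp (-t * lam) * ProbabilityTheory.mgf (fun ω => M k ω - m0) μ t
        ≤ Real.exp (-t * lam + h * t ^ 2 * V) := by
      rw [Real.exp_add]
      exact mul_le_mul_of_nonneg_left hmgf (Real.exp_pos _).le
    refine step.trans (Real.exp_le_exp.mpr ?_)
    -- the real arithmetic
    rcases eq_or_lt_of_le hV0 with hVz | hVp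
    · -- V = 0
      rw [← hVz]
      have htval : t = 3 / b := by
        rw [ht_def, ← hVz]
        field_simp
        ring
      rw [htval]
      simp only [mul_zero, add_zero, zero_add]
      rw [show -(3 / b) * lam = -(3 * lam) / b by ring]
      rw [div_le_div_iff₀ hb (by positivity)]
      nlinarith [mul_pos hb (mul_pos hlam hlam)]
    · -- V > 0
      have hu3 : u0 < 3 := by
        rw [hu0_def, ht_def]
        rw [div_mul_eq_mul_div, div_lt_iff₀ hden]
        nlinarith
      have hgeom := geom_aux hu0.le hu3
      have h13 : 0 < 1 - u0 / 3 := by linarith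
      have hhle : h ≤ 1 / (2 * (1 - u0 / 3)) := by
        rw [le_div_iff₀ (by positivity : (0:ℝ) < 2 * (1 - u0 / 3))] at hgeom
        rw [hh_def, div_le_div_iff₀ (by positivity) (by positivity : (0:ℝ) < 2 * (1 - u0 / 3))]
        linarith
      have hfrac : 1 - u0 / 3 = V / (V + b * lam / 3) := by
        rw [hu0_def, ht_def]
        field_simp
        ring
      have hbound : h * t ^ 2 * V ≤ lam ^ 2 / (2 * (V + b * lam / 3)) := by
        have : h * t ^ 2 * V ≤ (1 / (2 * (1 - u0 / 3))) * t ^ 2 * V := by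
          apply mul_le_mul_of_nonneg_right (mul_le_mul_of_nonneg_right hhle (by positivity)) hVp.le
        refine this.trans (le_of_eq ?_)
        rw [hfrac, ht_def]
        field_simp
      have htlam : t * lam = lam ^ 2 / (V + b * lam / 3) := by
        rw [ht_def]; field_simp
      have : -t * lam + h * t ^ 2 * V ≤ -(lam ^ 2 / (V + b * lam / 3)) + lam ^ 2 / (2 * (V + b * lam / 3)) := by
        rw [neg_mul, htlam]
        linarith
      refine this.trans (le_of_eq ?_)
      field_simp
      ring
  -- conclude
  refine (ENNReal.le_ofReal_iff_toReal_le (measure_ne_top μ _) (Real.exp_nonneg _)).mpr ?_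
  exact hchern.trans hfinal
end

section
/- The sequence of random variables M(0,n−a), M(1,1), …, M(n,n−a) forms a martingale with respect to the filtration {F(t,i)}, where F(t,i) is the σ-algebra generated by M(0,n−a),…,M(t,i). -/
open MeasureTheory Filter Finset

noncomputable section

/-- `P[Bin(t,p) ≥ r]`, the upper tail of the binomial distribution. -/
def binomTail (r t : ℕ) (p : ℝ) : ℝ :=
  ∑ j ∈ Finset.Icc r t, (t.choose j : ℝ) * p ^ j * (1 - p) ^ (t - j)

/-- `δ = max{(n p^r)^{1/(2(r-1))}, (np)^{-1/(4(r-1))}}`. -/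
def deltaP (r : ℕ) (p : ℕ → ℝ) (n : ℕ) : ℝ :=
  max (((n : ℝ) * p n ^ r) ^ ((1 : ℝ) / (2 * ((r : ℝ) - 1))))
      (((n : ℝ) * p n) ^ (-(1 : ℝ) / (4 * ((r : ℝ) - 1))))

/-- `t_0 = ((1+δ)(r-1)!/(n p^r))^{1/(r-1)}`. -/
def tZero (r : ℕ) (p : ℕ → ℝ) (n : ℕ) : ℝ :=
  ((1 + deltaP r p n) * (Nat.factorial (r - 1) : ℝ) / ((n : ℝ) * p n ^ r)) ^
    ((1 : ℝ) / ((r : ℝ) - 1))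

/-- `(n π̂(t) - t)/(1 - π̂(t))`. -/
def critFun (r : ℕ) (p : ℕ → ℝ) (n : ℕ) (t : ℕ) : ℝ :=
  ((n : ℝ) * binomTail r t (p n) - t) / (1 - binomTail r t (p n))

/-- `a_c = - min_{t ≤ t_0} (n π̂(t) - t)/(1 - π̂(t))`. -/
def aCrit (r : ℕ) (p : ℕ → ℝ) (n : ℕ) : ℝ :=
  - Finset.min' ((Finset.range (⌊tZero r p n⌋₊ + 1)).image (critFun r p n))
      (Finset.Nonempty.image (Finset.nonempty_range_iff.mpr (Nat.succ_ne_zero _)) _)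

/-- `t_c`, the smallest `t ≤ t_0` attaining the minimum defining `a_c`. -/
def tCrit (r : ℕ) (p : ℕ → ℝ) (n : ℕ) : ℕ :=
  sInf {t : ℕ | t ≤ ⌊tZero r p n⌋₊ ∧ critFun r p n t = - aCrit r p n}

/-- The Bernoulli measure with parameter `q` on `Bool`. -/
def bernoulliMeasure (q : ℝ) : Measure Bool :=
  (PMF.bernoulli (min q.toNNReal 1) (min_le_right _ _)).toMeasure

instance (q : ℝ) : IsProbabilityMeasure (bernoulliMeasure q) :=
  PMF.toMeasure.isProbabilityMeasure _

/-- The binomial random graph `G(n,q)`: each potential edge is present independently with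
probability `q`. A sample is a function `Sym2 (Fin n) → Bool`. -/
def gnp (n : ℕ) (q : ℝ) : Measure (Sym2 (Fin n) → Bool) :=
  Measure.pi fun _ => bernoulliMeasure q

/-- The simple graph determined by a sample `ω` of `G(n,q)`. -/
def toGraph {n : ℕ} (ω : Sym2 (Fin n) → Bool) : SimpleGraph (Fin n) where
  Adj u v := u ≠ v ∧ ω s(u, v) = true
  symm := ⟨by
    intro u v h
    exact ⟨h.1.symm, by rw [Sym2.eq_swap]; exact h.2⟩⟩
  loopless := ⟨fun v h => h.1 rfl⟩

/-- The number of neighbours of `v` inside the set `S` in the graph given by `ω`. -/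
def nbrCount {n : ℕ} (ω : Sym2 (Fin n) → Bool) (S : Finset (Fin n)) (v : Fin n) : ℕ :=
  (S.filter fun u => u ≠ v ∧ ω s(u, v) = true).card

/-- The set of the first `a` vertices, the initially infected set `A(0) = {1,…,a}`. -/
def initSet (n a : ℕ) : Finset (Fin n) :=
  Finset.univ.filter fun v => v.val < a

/-- One round of bootstrap percolation with threshold `r`. -/
def bstep {n : ℕ} (r : ℕ) (ω : Sym2 (Fin n) → Bool) (S : Finset (Fin n)) : Finset (Fin n) :=
  S ∪ Finset.univ.filter fun v => r ≤ nbrCount ω S v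

/-- The final infected set `A_f` of bootstrap percolation with threshold `r` started at `A0`. -/
def finalSet {n : ℕ} (r : ℕ) (ω : Sym2 (Fin n) → Bool) (A0 : Finset (Fin n)) : Finset (Fin n) :=
  (bstep r ω)^[n] A0

/-- The exploration process: `Z(t)`, the set of examined vertices at time `t`. -/
def expZ {n : ℕ} (r a : ℕ) (ω : Sym2 (Fin n) → Bool) : ℕ → Finset (Fin n)
  | 0 => ∅
  | t + 1 =>
    let Z := expZ r a ω t
    let A := initSet n a ∪ (Finset.univ.filter fun v => a ≤ v.val ∧ r ≤ nbrCount ω Z v)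
    if h : (A \ Z).Nonempty then insert ((A \ Z).min' h) Z else Z

/-- The infected set `A(t)` at time `t` of the exploration process. -/
def expA {n : ℕ} (r a : ℕ) (ω : Sym2 (Fin n) → Bool) (t : ℕ) : Finset (Fin n) :=
  initSet n a ∪ (Finset.univ.filter fun v => a ≤ v.val ∧ r ≤ nbrCount ω (expZ r a ω t) v)

/-- `T`, the smallest `t` with `A(t) = Z(t)`. -/
def expT {n : ℕ} (r a : ℕ) (ω : Sym2 (Fin n) → Bool) : ℕ :=
  sInf {t | expA r a ω t = expZ r a ω t}

/-- `X(t,i)`, the indicator that vertex `a+i` has at least `r` neighbours in `Z(t)`. -/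
def expX {n : ℕ} (r a : ℕ) (ω : Sym2 (Fin n) → Bool) (t i : ℕ) : ℝ :=
  if h : 1 ≤ i ∧ a + i ≤ n then
    (if r ≤ nbrCount ω (expZ r a ω t) ⟨a + i - 1, by omega⟩ then 1 else 0)
  else 0

/-- `π(t) = π̂(t)` for `t ≤ T` and `π(t) = π̂(T)` for `t > T`. -/
def expPi {n : ℕ} (r a : ℕ) (q : ℝ) (ω : Sym2 (Fin n) → Bool) (t : ℕ) : ℝ :=
  if t ≤ expT r a ω then binomTail r t q else binomTail r (expT r a ω) q

/-- The martingale value `M(t,i)`. -/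
def expM {n : ℕ} (r a : ℕ) (q : ℝ) (t i : ℕ) (ω : Sym2 (Fin n) → Bool) : ℝ :=
  (∑ j ∈ Finset.Icc 1 i, (expX r a ω t j - expPi r a q ω t) / (1 - expPi r a q ω t)) +
  ∑ j ∈ Finset.Icc (i + 1) (n - a),
    (expX r a ω (t - 1) j - expPi r a q ω (t - 1)) / (1 - expPi r a q ω (t - 1))

/-- The rounds `(0,n-a), (1,1), …, (n,n-a)` listed linearly: round `0` is `(0,n-a)` and
round `k ≥ 1` is `(⌈k/(n-a)⌉, ((k-1) mod (n-a)) + 1)`. -/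
def expMseq (n r a : ℕ) (q : ℝ) (k : ℕ) (ω : Sym2 (Fin n) → Bool) : ℝ :=
  if k = 0 then expM r a q 0 (n - a) ω
  else expM r a q ((k - 1) / (n - a) + 1) ((k - 1) % (n - a) + 1) ω


namespace BP
variable {q : ℝ}

lemma bsum_total (m : ℕ) :
    ∑ c ∈ Finset.Ico 0 (m+1), (m.choose c : ℝ) * q ^ c * (1-q) ^ (m - c) = 1 := by
  have h := add_pow q (1-q) m
  rw [show q + (1-q) = 1 by ring, one_pow] at h
  rw [Nat.Ico_zero_eq_range]
  exact (Finset.sum_congr rfl fun c _ => by ring).trans h.symm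

lemma bsum_lt (r m : ℕ) :
    ∑ c ∈ Finset.range r, (m.choose c:ℝ) * q^c * (1-q)^(m-c) = 1 - binomTail r m q := by
  have htot := bsum_total (q:=q) m
  rw [← Nat.Ico_zero_eq_range]
  rcases le_or_gt r (m+1) with h | h
  · have hsplit := Finset.sum_Ico_consecutive
      (fun c => (m.choose c:ℝ)*q^c*(1-q)^(m-c)) (Nat.zero_le r) h
    rw [Finset.Ico_add_one_right_eq_Icc] at hsplit
    rw [binomTail]
    linarith
  · have h0 : binomTail r m q = 0 := by
      rw [binomTail, Finset.Icc_eq_empty (by omega), Finset.sum_empty]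
    have hsplit := Finset.sum_Ico_consecutive
      (fun c => (m.choose c:ℝ)*q^c*(1-q)^(m-c)) (Nat.zero_le (m+1)) (le_of_lt h)
    have hz : ∑ c ∈ Finset.Ico (m+1) r, (m.choose c:ℝ)*q^c*(1-q)^(m-c) = 0 := by
      apply Finset.sum_eq_zero; intro c hc
      rw [Finset.mem_Ico] at hc
      rw [Nat.choose_eq_zero_of_lt (by omega)]; simp
    rw [h0]
    linarith

lemma binomTail_succ (hr : 1 ≤ r) (m : ℕ) :
    binomTail r (m+1) q
      = binomTail r m q + (m.choose (r-1):ℝ) * q^r * (1-q)^(m-(r-1)) := by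
  rcases le_or_gt r (m+1) with hrm | hrm
  · have hmap : Finset.map (addRightEmbedding 1) (Finset.Icc (r-1) m) = Finset.Icc r (m+1) := by
      rw [Finset.map_add_right_Icc]; congr 1; omega
    rw [binomTail, ← hmap, Finset.sum_map]
    simp only [addRightEmbedding_apply]
    have hterm : ∀ j ∈ Finset.Icc (r-1) m,
        ((m+1).choose (j+1) : ℝ) * q^(j+1) * (1-q)^(m+1-(j+1))
        = (m.choose j : ℝ) * q^(j+1) * (1-q)^(m-j)
          + (m.choose (j+1) : ℝ) * q^(j+1) * (1-q)^(m-j) := by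
      intro j hj
      rw [show m + 1 - (j+1) = m - j by omega, Nat.choose_succ_succ']
      push_cast
      ring
    rw [Finset.sum_congr rfl hterm, Finset.sum_add_distrib]
    have h1 : ∑ j ∈ Finset.Icc (r-1) m, (m.choose j : ℝ) * q^(j+1) * (1-q)^(m-j)
        = q * ((m.choose (r-1):ℝ) * q^(r-1) * (1-q)^(m-(r-1)) + binomTail r m q) := by
      rw [Finset.Icc_eq_cons_Ioc (by omega), Finset.sum_cons, ← Finset.Icc_add_one_left_eq_Ioc,
        show Finset.Icc (r - 1 + 1) m = Finset.Icc r m from by congr 1; omega]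
      rw [binomTail, mul_add, Finset.mul_sum]
      congr 1
      · ring
      · exact Finset.sum_congr rfl fun j _ => by ring
    have h2 : ∑ j ∈ Finset.Icc (r-1) m, (m.choose (j+1) : ℝ) * q^(j+1) * (1-q)^(m-j)
        = (1-q) * binomTail r m q := by
      have hmap2 : Finset.map (addRightEmbedding 1) (Finset.Icc (r-1) m) = Finset.Icc r (m+1) := hmap
      rw [show (∑ j ∈ Finset.Icc (r-1) m, (m.choose (j+1) : ℝ) * q^(j+1) * (1-q)^(m-j))
          = ∑ j ∈ Finset.Icc (r-1) m, (m.choose (j+1) : ℝ) * q^(j+1) * (1-q)^(m+1-(j+1)) from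
        Finset.sum_congr rfl fun j _ => by rw [Nat.succ_sub_succ]]
      rw [show (∑ j ∈ Finset.Icc (r-1) m, (m.choose (j+1) : ℝ) * q^(j+1) * (1-q)^(m+1-(j+1)))
          = ∑ j ∈ Finset.map (addRightEmbedding 1) (Finset.Icc (r-1) m),
              (m.choose j : ℝ) * q^j * (1-q)^(m+1-j) from by
        rw [Finset.sum_map]; simp only [addRightEmbedding_apply]]
      rw [hmap2]
      rw [Finset.sum_Icc_succ_top hrm]
      rw [Nat.choose_succ_self]
      push_cast
      rw [binomTail, Finset.mul_sum]
      have : ∀ j ∈ Finset.Icc r m, (m.choose j : ℝ) * q^j * (1-q)^(m+1-j)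
          = (1-q) * ((m.choose j : ℝ) * q^j * (1-q)^(m-j)) := by
        intro j hj
        rw [Finset.mem_Icc] at hj
        rw [show m+1-j = (m-j)+1 from by omega, pow_succ]
        ring
      rw [Finset.sum_congr rfl this]
      simp
    rw [h1, h2]
    have hp : q * q^(r-1) = q^r := by
      rw [← pow_succ']; congr 1; omega
    linear_combination ((m.choose (r-1):ℝ) * (1-q)^(m-(r-1))) * hp
  · have e1 : Finset.Icc r (m+1) = ∅ := Finset.Icc_eq_empty (by omega)
    have e2 : Finset.Icc r m = ∅ := Finset.Icc_eq_empty (by omega)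
    rw [binomTail, binomTail, e1, e2, Nat.choose_eq_zero_of_lt (by omega)]
    simp

lemma one_sub_binomTail_pos (hq0 : 0 < q) (hq1 : q < 1) (hr : 1 ≤ r) (m : ℕ) :
    0 < 1 - binomTail r m q := by
  rw [← bsum_lt]
  have h0 : (0:ℝ) < (m.choose 0 : ℝ) * q^0 * (1-q)^(m-0) := by
    simp only [Nat.choose_zero_right, Nat.cast_one, pow_zero, one_mul, Nat.sub_zero]
    exact pow_pos (by linarith) _
  refine lt_of_lt_of_le h0 (Finset.single_le_sum (f := fun c => (m.choose c:ℝ)*q^c*(1-q)^(m-c)) ?_ ?_)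
  · intro c _
    apply mul_nonneg (mul_nonneg (by positivity) (by positivity)) (pow_nonneg (by linarith) _)
  · simpa using (show 0 < r by omega)
end BP


namespace BP
variable {n : ℕ}

lemma nbrCount_mono (ω : Sym2 (Fin n) → Bool) {S S' : Finset (Fin n)} (h : S ⊆ S') (v : Fin n) :
    nbrCount ω S v ≤ nbrCount ω S' v :=
  Finset.card_le_card (Finset.filter_subset_filter _ h)

lemma nbrCount_insert (ω : Sym2 (Fin n) → Bool) {S : Finset (Fin n)} {u v : Fin n} (hu : u ∉ S) :
    nbrCount ω (insert u S) v
      = nbrCount ω S v + (if u ≠ v ∧ ω s(u,v) = true then 1 else 0) := by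
  classical
  rw [nbrCount, nbrCount, Finset.filter_insert]
  split
  · rw [Finset.card_insert_of_notMem (fun h => hu (Finset.mem_of_mem_filter _ h))]
  · rw [add_zero]

variable (r a : ℕ) (ω : Sym2 (Fin n) → Bool)

lemma expZ_succ (t : ℕ) :
    expZ r a ω (t+1) = if h : ((expA r a ω t) \ expZ r a ω t).Nonempty
      then insert (((expA r a ω t) \ expZ r a ω t).min' h) (expZ r a ω t)
      else expZ r a ω t := rfl

lemma expZ_subset_succ (t : ℕ) : expZ r a ω t ⊆ expZ r a ω (t+1) := by
  rw [expZ_succ]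
  split
  · exact Finset.subset_insert _ _
  · exact Finset.Subset.refl _

lemma expZ_mono {t t' : ℕ} (h : t ≤ t') : expZ r a ω t ⊆ expZ r a ω t' := by
  induction t' with
  | zero =>
    have ht : t = 0 := Nat.le_zero.mp h
    subst ht
    exact Finset.Subset.refl _
  | succ t' ih =>
    rcases Nat.lt_or_ge t (t'+1) with h' | h'
    · exact (ih (by omega)).trans (expZ_subset_succ r a ω t')
    · rw [show t = t'+1 by omega]

lemma expA_mono {t t' : ℕ} (h : t ≤ t') : expA r a ω t ⊆ expA r a ω t' := by
  rw [expA, expA]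
  apply Finset.union_subset_union le_rfl
  apply Finset.monotone_filter_right
  intro v _ hv
  exact ⟨hv.1, hv.2.trans (nbrCount_mono ω (expZ_mono r a ω h) v)⟩

lemma expZ_subset_expA (t : ℕ) : expZ r a ω t ⊆ expA r a ω t := by
  induction t with
  | zero => intro x hx; simp [expZ] at hx
  | succ t ih =>
    rw [expZ_succ]
    have hsub : expA r a ω t ⊆ expA r a ω (t+1) := expA_mono r a ω (Nat.le_succ t)
    split
    · rename_i h
      apply Finset.insert_subset
      · exact hsub (Finset.mem_sdiff.mp (Finset.min'_mem _ h)).1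
      · exact ih.trans hsub
    · exact ih.trans hsub

lemma card_expZ_succ {t : ℕ} (h : expA r a ω t ≠ expZ r a ω t) :
    (expZ r a ω (t+1)).card = (expZ r a ω t).card + 1 := by
  have hne : ((expA r a ω t) \ expZ r a ω t).Nonempty := by
    rw [Finset.sdiff_nonempty]
    intro hsub
    exact h (Finset.Subset.antisymm hsub (expZ_subset_expA r a ω t))
  rw [expZ_succ, dif_pos hne, Finset.card_insert_of_notMem
    (Finset.mem_sdiff.mp (Finset.min'_mem _ hne)).2]

lemma exists_fixed : ∃ t, expA r a ω t = expZ r a ω t := by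
  by_contra hc
  push_neg at hc
  have hcard : ∀ t, (expZ r a ω t).card = t := by
    intro t
    induction t with
    | zero => rfl
    | succ t ih => rw [card_expZ_succ r a ω (hc t), ih]
  have := Finset.card_le_card (Finset.subset_univ (expZ r a ω (n+1)))
  rw [hcard, Finset.card_univ, Fintype.card_fin] at this
  omega

lemma expT_mem : expA r a ω (expT r a ω) = expZ r a ω (expT r a ω) :=
  Nat.sInf_mem (exists_fixed r a ω)

lemma le_expT_iff (t : ℕ) :
    t ≤ expT r a ω ↔ ∀ s, s < t → expA r a ω s ≠ expZ r a ω s := by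
  constructor
  · intro h s hs
    exact Nat.notMem_of_lt_sInf (lt_of_lt_of_le hs h)
  · intro h
    by_contra hlt
    exact h _ (by omega) (expT_mem r a ω)

lemma expZ_frozen {t : ℕ} (h : expT r a ω ≤ t) :
    expZ r a ω t = expZ r a ω (expT r a ω) := by
  obtain ⟨d, rfl⟩ := Nat.exists_eq_add_of_le h
  induction d with
  | zero => rfl
  | succ d ih =>
    rw [← Nat.add_assoc, expZ_succ]
    have hA : expA r a ω (expT r a ω + d) = expZ r a ω (expT r a ω + d) := by
      have h1 : expZ r a ω (expT r a ω + d) = expZ r a ω (expT r a ω) := ih (by omega)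
      have h2 : expA r a ω (expT r a ω + d) ⊆ expA r a ω (expT r a ω) := by
        rw [expA, expA, h1]
      refine Finset.Subset.antisymm ?_ (expZ_subset_expA _ _ _ _)
      rw [h1, ← expT_mem r a ω]
      exact h2
    rw [hA]
    simp [ih (by omega)]

lemma card_expZ {t : ℕ} (h : t ≤ expT r a ω) : (expZ r a ω t).card = t := by
  induction t with
  | zero => rfl
  | succ t ih =>
    rw [card_expZ_succ r a ω ((le_expT_iff r a ω _).mp h t (by omega)), ih (by omega)]

/-! ### kill -/

def kill (v : Fin n) (ω : Sym2 (Fin n) → Bool) : Sym2 (Fin n) → Bool :=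
  fun e => if v ∈ e then false else ω e

variable {v : Fin n}

lemma nbrCount_kill_self (S : Finset (Fin n)) : nbrCount (kill v ω) S v = 0 := by
  rw [nbrCount, Finset.card_eq_zero, Finset.filter_eq_empty_iff]
  intro u _
  rw [kill, if_pos (Sym2.mem_mk_right u v)]
  simp

lemma nbrCount_kill_eq {S : Finset (Fin n)} {v' : Fin n} (hS : v ∉ S) (hv : v' ≠ v) :
    nbrCount (kill v ω) S v' = nbrCount ω S v' := by
  rw [nbrCount, nbrCount]
  congr 1
  apply Finset.filter_congr
  intro u hu
  have huv : u ≠ v := fun h => hS (h ▸ hu)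
  have hnm : ¬ v ∈ s(u, v') := by
    rw [Sym2.mem_iff]
    push_neg
    exact ⟨fun h => huv h.symm, fun h => hv h.symm⟩
  rw [kill, if_neg hnm]

lemma not_mem_expA_kill (hr : 1 ≤ r) (hva : a ≤ v.val) (t : ℕ) :
    v ∉ expA r a (kill v ω) t := by
  rw [expA, Finset.mem_union]
  push_neg
  constructor
  · rw [initSet, Finset.mem_filter]
    push_neg
    intro _
    omega
  · rw [Finset.mem_filter]
    push_neg
    intro _ _
    rw [nbrCount_kill_self]
    omega

lemma not_mem_expZ_kill (hr : 1 ≤ r) (hva : a ≤ v.val) (t : ℕ) :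
    v ∉ expZ r a (kill v ω) t := by
  induction t with
  | zero => simp [expZ]
  | succ t ih =>
    rw [expZ_succ]
    split
    · rename_i h
      rw [Finset.mem_insert]
      push_neg
      refine ⟨fun heq => ?_, ih⟩
      apply not_mem_expA_kill r a ω hr hva t
      nth_rewrite 2 [heq]
      exact (Finset.mem_sdiff.mp (Finset.min'_mem _ h)).1
    · exact ih

lemma expA_eq_of_kill (hr : 1 ≤ r) (hva : a ≤ v.val) {t : ℕ}
    (hZ : expZ r a ω t = expZ r a (kill v ω) t)
    (hcnt : nbrCount ω (expZ r a (kill v ω) t) v < r) :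
    expA r a ω t = expA r a (kill v ω) t := by
  rw [expA, expA, hZ]
  congr 1
  apply Finset.filter_congr
  intro x _
  by_cases hx : x = v
  · subst hx
    rw [nbrCount_kill_self]
    constructor
    · rintro ⟨-, h2⟩; omega
    · rintro ⟨-, h2⟩; omega
  · rw [nbrCount_kill_eq ω (not_mem_expZ_kill r a ω hr hva t) hx]

lemma expZ_eq_kill_bar (hr : 1 ≤ r) (hva : a ≤ v.val) :
    ∀ t : ℕ, (∀ s, s < t → nbrCount ω (expZ r a (kill v ω) s) v < r) →
      expZ r a ω t = expZ r a (kill v ω) t := by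
  intro t
  induction t with
  | zero => intro _; rfl
  | succ t ih =>
    intro H
    have hZ := ih (fun s hs => H s (by omega))
    have hA := expA_eq_of_kill r a ω hr hva hZ (H t (by omega))
    rw [expZ_succ, expZ_succ, hA, hZ]

lemma expZ_eq_kill_self (hr : 1 ≤ r) (hva : a ≤ v.val) :
    ∀ t : ℕ, (∀ s, s < t → nbrCount ω (expZ r a ω s) v < r) →
      expZ r a ω t = expZ r a (kill v ω) t := by
  intro t
  induction t with
  | zero => intro _; rfl
  | succ t ih =>
    intro H
    have hZ := ih (fun s hs => H s (by omega))
    have hA := expA_eq_of_kill r a ω hr hva hZ (hZ ▸ H t (by omega))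
    rw [expZ_succ, expZ_succ, hA, hZ]

end BP

namespace BP
section Transfer
variable {n : ℕ} (r a : ℕ) (ω : Sym2 (Fin n) → Bool) {v : Fin n}
variable (hr : 1 ≤ r) (hva : a ≤ v.val) {t : ℕ}

lemma H_of_cnt {t : ℕ} (hcnt : nbrCount ω (expZ r a (kill v ω) (t-1)) v < r) :
    ∀ s, s ≤ t-1 → nbrCount ω (expZ r a (kill v ω) s) v < r :=
  fun s hs => lt_of_le_of_lt (nbrCount_mono ω (expZ_mono r a _ hs) v) hcnt

variable (H : ∀ s, s ≤ t-1 → nbrCount ω (expZ r a (kill v ω) s) v < r) (ht : 1 ≤ t)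

include hr hva H ht

lemma expZ_eq_of_H {s : ℕ} (hs : s ≤ t) : expZ r a ω s = expZ r a (kill v ω) s :=
  expZ_eq_kill_bar r a ω hr hva s (fun s' hs' => H s' (by omega))

lemma expA_eq_of_H {s : ℕ} (hs : s ≤ t-1) : expA r a ω s = expA r a (kill v ω) s :=
  expA_eq_of_kill r a ω hr hva (expZ_eq_of_H r a ω hr hva H ht (by omega)) (H s hs)

lemma fixed_iff_of_H {s : ℕ} (hs : s ≤ t-1) :
    (expA r a ω s = expZ r a ω s) ↔ (expA r a (kill v ω) s = expZ r a (kill v ω) s) := by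
  rw [expA_eq_of_H r a ω hr hva H ht hs, expZ_eq_of_H r a ω hr hva H ht (by omega)]

lemma le_expT_iff_kill : t ≤ expT r a ω ↔ t ≤ expT r a (kill v ω) := by
  rw [le_expT_iff, le_expT_iff]
  exact forall_congr' fun s => imp_congr_right fun hs =>
    not_congr (fixed_iff_of_H r a ω hr hva H ht (by omega))

lemma expT_eq_of_H (hlt : expT r a ω < t ∨ expT r a (kill v ω) < t) :
    expT r a ω = expT r a (kill v ω) := by
  rcases hlt with h | h
  · have h1 : expT r a (kill v ω) ≤ expT r a ω :=
      Nat.sInf_le ((fixed_iff_of_H r a ω hr hva H ht (by omega)).mp (expT_mem r a ω))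
    have h2 : expT r a ω ≤ expT r a (kill v ω) :=
      Nat.sInf_le ((fixed_iff_of_H r a ω hr hva H ht (by omega)).mpr (expT_mem r a (kill v ω)))
    omega
  · have h1 : expT r a ω ≤ expT r a (kill v ω) :=
      Nat.sInf_le ((fixed_iff_of_H r a ω hr hva H ht (by omega)).mpr (expT_mem r a (kill v ω)))
    have h2 : expT r a (kill v ω) ≤ expT r a ω :=
      Nat.sInf_le ((fixed_iff_of_H r a ω hr hva H ht (by omega)).mp (expT_mem r a ω))
    omega

lemma expPi_eq_of_H (q : ℝ) {s : ℕ} (hs : s ≤ t) :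
    expPi r a q ω s = expPi r a q (kill v ω) s := by
  by_cases h1 : s ≤ expT r a ω
  · by_cases h2 : s ≤ expT r a (kill v ω)
    · rw [expPi, expPi, if_pos h1, if_pos h2]
    · have hTeq := expT_eq_of_H r a ω hr hva H ht (Or.inr (by omega))
      omega
  · have hTeq := expT_eq_of_H r a ω hr hva H ht (Or.inl (by omega))
    rw [expPi, expPi, if_neg h1, if_neg (hTeq ▸ h1), hTeq]

omit hr hva H ht

lemma expX_form {j : ℕ} (w : Fin n) (hwf : 1 ≤ j ∧ a + j ≤ n) (hw : w.val = a + j - 1) (s : ℕ) :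
    expX r a ω s j = (if r ≤ nbrCount ω (expZ r a ω s) w then (1:ℝ) else 0) := by
  rcases w with ⟨wv, hwl⟩
  simp only at hw
  subst hw
  rw [expX, dif_pos hwf]

include hr hva H ht

lemma expX_eq_of_H {s j : ℕ} (hs : s ≤ t)
    (hj : (1 ≤ j ∧ a + j - 1 = v.val) → s ≤ t - 1) :
    expX r a ω s j = expX r a (kill v ω) s j := by
  by_cases hwf : 1 ≤ j ∧ a + j ≤ n
  · by_cases hvj : a + j - 1 = v.val
    · have hst : s ≤ t - 1 := hj ⟨hwf.1, hvj⟩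
      rw [expX_form r a ω v hwf hvj.symm, expX_form r a (kill v ω) v hwf hvj.symm]
      have h1 : nbrCount ω (expZ r a ω s) v < r := by
        rw [expZ_eq_of_H r a ω hr hva H ht hs]
        exact H s hst
      rw [if_neg (by omega), if_neg (by rw [nbrCount_kill_self]; omega)]
    · have hwlt : a + j - 1 < n := by omega
      rw [expX_form r a ω ⟨a+j-1, hwlt⟩ hwf rfl, expX_form r a (kill v ω) ⟨a+j-1, hwlt⟩ hwf rfl]
      have hwv : (⟨a+j-1, hwlt⟩ : Fin n) ≠ v := fun h => hvj (congrArg Fin.val h)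
      rw [expZ_eq_of_H r a ω hr hva H ht hs,
        nbrCount_kill_eq ω (not_mem_expZ_kill r a ω hr hva s) hwv]
  · rw [expX, expX, dif_neg hwf, dif_neg hwf]

lemma expM_eq_of_H (q : ℝ) {i : ℕ} (hi1 : 1 ≤ i) (hvv : v.val = a + i - 1)
    {t' i' : ℕ} (ht' : t' ≤ t) (hti : t' = t → i' < i) :
    expM r a q t' i' ω = expM r a q t' i' (kill v ω) := by
  rw [expM, expM]
  congr 1
  · apply Finset.sum_congr rfl
    intro j hj
    rw [Finset.mem_Icc] at hj
    rw [expX_eq_of_H r a ω hr hva H ht ht' (fun hc => by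
        have : j = i := by omega
        subst this
        rcases Nat.lt_or_ge t' t with h | h
        · omega
        · exact absurd (hti (by omega)) (by omega)),
      expPi_eq_of_H r a ω hr hva H ht q ht']
  · apply Finset.sum_congr rfl
    intro j hj
    rw [expX_eq_of_H r a ω hr hva H ht (by omega) (fun hc => by omega),
      expPi_eq_of_H r a ω hr hva H ht q (by omega)]

lemma expMseq_eq_of_H (q : ℝ) {k : ℕ} (hk : 1 ≤ k) (hd : a < n)
    (htdef : t = (k-1)/(n-a) + 1) {i : ℕ} (hidef : i = (k-1) % (n-a) + 1)
    (hvv : v.val = a + i - 1) :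
    ∀ j ≤ k - 1, expMseq n r a q j ω = expMseq n r a q j (kill v ω) := by
  intro j hj
  have hi1 : 1 ≤ i := by omega
  by_cases hj0 : j = 0
  · rw [expMseq, expMseq, if_pos hj0, if_pos hj0]
    exact expM_eq_of_H r a ω hr hva H ht q hi1 hvv (by omega) (fun h => by omega)
  · rw [expMseq, expMseq, if_neg hj0, if_neg hj0]
    have e1 := Nat.div_add_mod (j-1) (n-a)
    have e2 := Nat.div_add_mod (k-1) (n-a)
    have hm1 : (j-1) % (n-a) < n-a := Nat.mod_lt _ (by omega)
    have hm2 : (k-1) % (n-a) < n-a := Nat.mod_lt _ (by omega)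
    have hdiv : (j-1)/(n-a) ≤ (k-1)/(n-a) := Nat.div_le_div_right (by omega)
    refine expM_eq_of_H r a ω hr hva H ht q hi1 hvv (by omega) (fun h => ?_)
    have hdeq : (j-1)/(n-a) = (k-1)/(n-a) := by omega
    rw [hdeq] at e1
    omega

end Transfer

lemma mem_iff_of_inv {N R A : ℕ} {Q : ℝ} {k : ℕ} {P : (Sym2 (Fin N) → Bool) → Prop}
    {κf : (Sym2 (Fin N) → Bool) → (Sym2 (Fin N) → Bool)}
    (hinv : ∀ j ≤ k, ∀ ω, P ω → expMseq N R A Q j ω = expMseq N R A Q j (κf ω))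
    {s : Set (Sym2 (Fin N) → Bool)}
    (hs : MeasurableSet[⨆ j ∈ Set.Iic k,
      MeasurableSpace.comap (expMseq N R A Q j) (inferInstance : MeasurableSpace ℝ)] s) :
    ∀ ω, P ω → (ω ∈ s ↔ κf ω ∈ s) := by
  let m' : MeasurableSpace (Sym2 (Fin N) → Bool) :=
    { MeasurableSet' := fun u => ∀ ω, P ω → (ω ∈ u ↔ κf ω ∈ u)
      measurableSet_empty := by intro ω _; simp
      measurableSet_compl := fun u hu ω hP => not_congr (hu ω hP)
      measurableSet_iUnion := fun f hf ω hP => by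
        simp only [Set.mem_iUnion]
        exact exists_congr fun i => hf i ω hP }
  have hle : (⨆ j ∈ Set.Iic k,
      MeasurableSpace.comap (expMseq N R A Q j) (inferInstance : MeasurableSpace ℝ)) ≤ m' := by
    refine iSup₂_le fun j hj => ?_
    rintro u ⟨B, hB, rfl⟩
    intro ω hP
    simp only [Set.mem_preimage]
    rw [hinv j hj ω hP]
  exact hle s hs
end BP

namespace BP
variable {n : ℕ}

/-- the new vertex explored at step `t` (going from `Z(t-1)` to `Z(t)`). -/
def uNext (r a t : ℕ) (ω : Sym2 (Fin n) → Bool) (dflt : Fin n) : Fin n :=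
  if h : ((expA r a ω (t-1)) \ expZ r a ω (t-1)).Nonempty
  then ((expA r a ω (t-1)) \ expZ r a ω (t-1)).min' h else dflt

def Dval (r t : ℕ) (q : ℝ) (c : ℕ) (b : Bool) : ℝ :=
  ((if c = r - 1 ∧ b = true then (1:ℝ) else 0) - binomTail r t q) / (1 - binomTail r t q)
  + binomTail r (t-1) q / (1 - binomTail r (t-1) q)

def Dterm (r a : ℕ) (q : ℝ) (t j : ℕ) (ω : Sym2 (Fin n) → Bool) : ℝ :=
  (expX r a ω t j - expPi r a q ω t) / (1 - expPi r a q ω t)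

variable (r a : ℕ) (ω : Sym2 (Fin n) → Bool)

lemma sdiff_nonempty_of_ne {t : ℕ} (h : expA r a ω t ≠ expZ r a ω t) :
    ((expA r a ω t) \ expZ r a ω t).Nonempty := by
  rw [Finset.sdiff_nonempty]
  intro hsub
  exact h (Finset.Subset.antisymm hsub (expZ_subset_expA r a ω t))

lemma one_sub_expPi_pos {q : ℝ} (hq0 : 0 < q) (hq1 : q < 1) (hr : 1 ≤ r) (s : ℕ) :
    0 < 1 - expPi r a q ω s := by
  rw [expPi]
  split
  · exact one_sub_binomTail_pos hq0 hq1 hr _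
  · exact one_sub_binomTail_pos hq0 hq1 hr _

lemma expM_def (q : ℝ) (t i : ℕ) : expM r a q t i ω
    = (∑ j ∈ Finset.Icc 1 i, Dterm r a q t j ω)
      + ∑ j ∈ Finset.Icc (i+1) (n-a), Dterm r a q (t-1) j ω := rfl

lemma diff_II {q : ℝ} {t i : ℕ} (hi : 2 ≤ i) (hid : i ≤ n - a) :
    expM r a q t i ω - expM r a q t (i-1) ω
      = Dterm r a q t i ω - Dterm r a q (t-1) i ω := by
  obtain ⟨i', rfl⟩ : ∃ i', i = i' + 1 := ⟨i-1, by omega⟩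
  rw [Nat.add_sub_cancel]
  rw [expM_def, expM_def]
  rw [Finset.sum_Icc_succ_top (show 1 ≤ i'+1 by omega)]
  rw [Finset.Icc_eq_cons_Ioc (show i'+1 ≤ n-a by omega), Finset.sum_cons, ← Finset.Icc_add_one_left_eq_Ioc]
  ring

lemma diff_I1 {q : ℝ} {t : ℕ} (hd : 1 ≤ n - a) :
    expM r a q t 1 ω - expM r a q (t-1) (n-a) ω
      = Dterm r a q t 1 ω - Dterm r a q (t-1) 1 ω := by
  rw [expM_def, expM_def]
  rw [Finset.Icc_eq_empty (show ¬ ((n-a)+1 ≤ n-a) by omega), Finset.sum_empty]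
  rw [Finset.Icc_self, Finset.sum_singleton]
  rw [Finset.Icc_eq_cons_Ioc hd, Finset.sum_cons, ← Finset.Icc_add_one_left_eq_Ioc]
  ring

lemma divmod_pred_zero {K d : ℕ} (hd : 1 ≤ d) (hK : 1 ≤ K) (h0 : K % d = 0) :
    (K-1)/d = K/d - 1 ∧ (K-1)%d = d-1 ∧ 1 ≤ K/d := by
  have e := Nat.div_add_mod K d
  have hdvd : K = d * (K/d) := by omega
  have hm1 : 1 ≤ K / d := by
    rcases Nat.eq_zero_or_pos (K/d) with h | h
    · rw [h, Nat.mul_zero] at hdvd; omega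
    · exact h
  obtain ⟨m', hm'⟩ : ∃ m', K / d = m' + 1 := ⟨K/d - 1, by omega⟩
  have hK1 : K - 1 = d - 1 + d * m' := by
    rw [hm', Nat.mul_add, Nat.mul_one] at hdvd
    omega
  have hdm := (Nat.div_mod_unique (show 0 < d by omega)).mpr
    (show d - 1 + d * m' = K - 1 ∧ d - 1 < d by omega)
  exact ⟨by omega, hdm.2, hm1⟩

lemma divmod_pred_pos {K d : ℕ} (hd : 1 ≤ d) (hK : 1 ≤ K) (h0 : K % d ≠ 0) :
    (K-1)/d = K/d ∧ (K-1)%d = K%d - 1 := by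
  have e := Nat.div_add_mod K d
  have hm : K % d < d := Nat.mod_lt _ (by omega)
  exact (Nat.div_mod_unique (show 0 < d by omega)).mpr
    (show K % d - 1 + d * (K / d) = K - 1 ∧ K % d - 1 < d by omega)

lemma diff_main {q : ℝ} {k : ℕ} (hk : 1 ≤ k) (hd : a < n)
    {t i : ℕ} (htdef : t = (k-1)/(n-a) + 1) (hidef : i = (k-1) % (n-a) + 1) :
    expMseq n r a q k ω - expMseq n r a q (k-1) ω
      = Dterm r a q t i ω - Dterm r a q (t-1) i ω := by
  have hd1 : 1 ≤ n - a := by omega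
  rw [expMseq, if_neg (by omega), ← htdef, ← hidef]
  by_cases hk1 : k = 1
  · subst hk1
    simp only [Nat.sub_self] at htdef hidef ⊢
    rw [Nat.zero_div] at htdef
    rw [Nat.zero_mod] at hidef
    rw [expMseq, if_pos rfl]
    subst htdef; subst hidef
    exact diff_I1 r a ω hd1
  · rw [expMseq, if_neg (by omega)]
    by_cases h0 : (k-1) % (n-a) = 0
    · obtain ⟨e1, e2, e3⟩ := divmod_pred_zero hd1 (show 1 ≤ k-1 by omega) h0
      rw [e1, e2, show (k-1)/(n-a) - 1 + 1 = (k-1)/(n-a) from by omega,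
        show (n-a) - 1 + 1 = n-a from by omega]
      have hi1 : i = 1 := by omega
      subst hi1
      have he : (k-1)/(n-a) = t - 1 := by omega
      rw [he]
      exact diff_I1 r a ω hd1
    · obtain ⟨e1, e2⟩ := divmod_pred_pos hd1 (show 1 ≤ k-1 by omega) h0
      rw [e1, e2, ← htdef, show (k-1) % (n-a) - 1 + 1 = (k-1) % (n-a) from by omega]
      have hmlt : (k-1) % (n-a) < n - a := Nat.mod_lt _ (by omega)
      have hDII := diff_II r a ω (q := q) (t := t) (show 2 ≤ i by omega) (show i ≤ n - a by omega)
      rw [show i - 1 = (k-1) % (n-a) from by omega] at hDII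
      exact hDII

section PW
variable {v : Fin n} {q : ℝ} {t i : ℕ}

lemma pointwise_key (hq0 : 0 < q) (hq1 : q < 1) (hr : 2 ≤ r)
    (ht : 1 ≤ t) (hi1 : 1 ≤ i) (hin : a + i ≤ n) (hvv : v.val = a + i - 1) :
    Dterm r a q t i ω - Dterm r a q (t-1) i ω =
      if t ≤ expT r a (kill v ω) ∧ nbrCount ω (expZ r a (kill v ω) (t-1)) v < r
      then Dval r t q (nbrCount ω (expZ r a (kill v ω) (t-1)) v)
        (ω s(uNext r a t (kill v ω) v, v))
      else 0 := by
  have hva : a ≤ v.val := by omega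
  have hr1 : 1 ≤ r := by omega
  by_cases hgood : t ≤ expT r a (kill v ω) ∧ nbrCount ω (expZ r a (kill v ω) (t-1)) v < r
  · rw [if_pos hgood]
    obtain ⟨hT, hc⟩ := hgood
    have H := H_of_cnt r a ω hc
    have hZt : expZ r a ω t = expZ r a (kill v ω) t :=
      expZ_eq_of_H r a ω hr1 hva H ht le_rfl
    have hZt1 : expZ r a ω (t-1) = expZ r a (kill v ω) (t-1) :=
      expZ_eq_of_H r a ω hr1 hva H ht (by omega)
    have hTω : t ≤ expT r a ω := (le_expT_iff_kill r a ω hr1 hva H ht).mpr hT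
    have hπt : expPi r a q ω t = binomTail r t q := by rw [expPi, if_pos hTω]
    have hπt1 : expPi r a q ω (t-1) = binomTail r (t-1) q := by
      rw [expPi, if_pos (by omega)]
    have hne : ((expA r a (kill v ω) (t-1)) \ expZ r a (kill v ω) (t-1)).Nonempty :=
      sdiff_nonempty_of_ne r a _ ((le_expT_iff r a _ t).mp hT (t-1) (by omega))
    have hu_def : uNext r a t (kill v ω) v
        = ((expA r a (kill v ω) (t-1)) \ expZ r a (kill v ω) (t-1)).min' hne := dif_pos hne
    have humem0 := Finset.min'_mem _ hne
    rw [← hu_def] at humem0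
    have humem := Finset.mem_sdiff.mp humem0
    have huv : uNext r a t (kill v ω) v ≠ v := by
      intro h
      have hmem1 := humem.1
      rw [h] at hmem1
      exact not_mem_expA_kill r a ω hr1 hva (t-1) hmem1
    have hZtop : expZ r a (kill v ω) t
        = insert (uNext r a t (kill v ω) v) (expZ r a (kill v ω) (t-1)) := by
      conv_lhs => rw [show t = (t-1)+1 by omega]
      rw [expZ_succ, dif_pos hne, hu_def]
    have hXt : expX r a ω t i
        = if r ≤ nbrCount ω (expZ r a (kill v ω) (t-1)) v
            + (if ω s(uNext r a t (kill v ω) v, v) = true then 1 else 0) then (1:ℝ) else 0 := by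
      rw [expX_form r a ω v ⟨hi1, hin⟩ hvv, hZt, hZtop, nbrCount_insert ω humem.2]
      have hsimp : (if uNext r a t (kill v ω) v ≠ v ∧ ω s(uNext r a t (kill v ω) v, v) = true
          then 1 else 0) = (if ω s(uNext r a t (kill v ω) v, v) = true then 1 else 0) := by
        simp [huv]
      rw [hsimp]
    have hXt1 : expX r a ω (t-1) i = 0 := by
      rw [expX_form r a ω v ⟨hi1, hin⟩ hvv, hZt1, if_neg (by omega)]
    rw [Dterm, Dterm, hXt, hXt1, hπt, hπt1, Dval]
    have hmatch : (if r ≤ nbrCount ω (expZ r a (kill v ω) (t-1)) v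
          + (if ω s(uNext r a t (kill v ω) v, v) = true then 1 else 0) then (1:ℝ) else 0)
        = (if nbrCount ω (expZ r a (kill v ω) (t-1)) v = r - 1
            ∧ ω s(uNext r a t (kill v ω) v, v) = true then (1:ℝ) else 0) := by
      by_cases hb : ω s(uNext r a t (kill v ω) v, v) = true
      · rw [if_pos hb]
        rw [if_congr (show (r ≤ nbrCount ω (expZ r a (kill v ω) (t-1)) v + 1)
            ↔ (nbrCount ω (expZ r a (kill v ω) (t-1)) v = r - 1
              ∧ ω s(uNext r a t (kill v ω) v, v) = true) from
          ⟨fun h => ⟨by omega, hb⟩, fun h => by omega⟩) rfl rfl]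
      · rw [if_neg hb, add_zero, if_neg (show ¬ r ≤ nbrCount ω (expZ r a (kill v ω) (t-1)) v
          from by omega), if_neg (fun h => hb h.2)]
    rw [hmatch]
    ring
  · rw [if_neg hgood]
    by_cases hc : nbrCount ω (expZ r a (kill v ω) (t-1)) v < r
    · have hT : ¬ t ≤ expT r a (kill v ω) := fun h => hgood ⟨h, hc⟩
      have H := H_of_cnt r a ω hc
      have hTω : ¬ t ≤ expT r a ω := fun h =>
        hT ((le_expT_iff_kill r a ω hr1 hva H ht).mp h)
      have hfrz : expZ r a ω t = expZ r a ω (t-1) := by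
        rw [expZ_frozen r a ω (show expT r a ω ≤ t by omega),
          expZ_frozen r a ω (show expT r a ω ≤ t-1 by omega)]
      have hπ : expPi r a q ω t = expPi r a q ω (t-1) := by
        rw [expPi, expPi, if_neg hTω]
        by_cases h2 : t - 1 ≤ expT r a ω
        · have he : t - 1 = expT r a ω := by omega
          rw [if_pos h2, he]
        · rw [if_neg h2]
      have hX : expX r a ω t i = expX r a ω (t-1) i := by
        rw [expX_form r a ω v ⟨hi1, hin⟩ hvv, expX_form r a ω v ⟨hi1, hin⟩ hvv, hfrz]
      rw [Dterm, Dterm, hX, hπ]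
      ring
    · push_neg at hc
      have hXt1 : r ≤ nbrCount ω (expZ r a ω (t-1)) v := by
        by_contra hlt
        push_neg at hlt
        have hZe := expZ_eq_kill_self r a ω hr1 hva (t-1)
          (fun s hs => lt_of_le_of_lt (nbrCount_mono ω (expZ_mono r a ω (by omega)) v) hlt)
        rw [hZe] at hlt
        omega
      have hXt : r ≤ nbrCount ω (expZ r a ω t) v :=
        le_trans hXt1 (nbrCount_mono ω (expZ_mono r a ω (by omega)) v)
      have e1 : (1 : ℝ) - expPi r a q ω t ≠ 0 :=
        ne_of_gt (one_sub_expPi_pos r a ω hq0 hq1 hr1 t)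
      have e2 : (1 : ℝ) - expPi r a q ω (t-1) ≠ 0 :=
        ne_of_gt (one_sub_expPi_pos r a ω hq0 hq1 hr1 (t-1))
      rw [Dterm, Dterm, expX_form r a ω v ⟨hi1, hin⟩ hvv, expX_form r a ω v ⟨hi1, hin⟩ hvv,
        if_pos hXt, if_pos hXt1, div_self e1, div_self e2, sub_self]
end PW
end BP

namespace BP
section Sums
variable {κ : Type*} [Fintype κ] [DecidableEq κ] {q : ℝ}

def wB (q : ℝ) (b : Bool) : ℝ := if b then q else 1 - q

lemma prodsum (G : κ → Bool → ℝ) :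
    ∑ η : κ → Bool, ∏ j, G j (η j) = ∏ j, (G j true + G j false) := by
  rw [show (∏ j, (G j true + G j false)) = ∏ j, ∑ b : Bool, G j b from
    Finset.prod_congr rfl fun j _ => by rw [Fintype.sum_bool]]
  rw [Finset.prod_univ_sum, Fintype.piFinset_univ]

lemma base_sum : ∑ η : κ → Bool, ∏ j, wB q (η j) = 1 := by
  rw [prodsum]
  rw [Finset.prod_congr rfl (fun j _ => show wB q true + wB q false = 1 by
    simp [wB])]
  exact Finset.prod_const_one

lemma split_sum (p : κ → Prop) [DecidablePred p] (g : (κ → Bool) → ℝ) :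
    ∑ η : κ → Bool, g η
      = ∑ η₁ : {x // p x} → Bool, ∑ η₂ : {x // ¬ p x} → Bool,
          g ((Equiv.piEquivPiSubtypeProd p (fun _ => Bool)).symm (η₁, η₂)) := by
  rw [← Equiv.sum_comp (Equiv.piEquivPiSubtypeProd p (fun _ => Bool)).symm g,
    Fintype.sum_prod_type]

lemma wB_split (p : κ → Prop) [DecidablePred p] (η₁ : {x // p x} → Bool)
    (η₂ : {x // ¬ p x} → Bool) :
    ∏ j, wB q ((Equiv.piEquivPiSubtypeProd p (fun _ => Bool)).symm (η₁, η₂) j)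
      = (∏ j, wB q (η₁ j)) * (∏ j, wB q (η₂ j)) := by
  rw [← Fintype.prod_subtype_mul_prod_subtype p
    (fun j => wB q ((Equiv.piEquivPiSubtypeProd p (fun _ => Bool)).symm (η₁, η₂) j))]
  congr 1
  · apply Finset.prod_congr rfl
    intro j _
    rw [Equiv.piEquivPiSubtypeProd_symm_apply, dif_pos j.2]
  · apply Finset.prod_congr rfl
    intro j _
    rw [Equiv.piEquivPiSubtypeProd_symm_apply, dif_neg j.2]

lemma onecoord_ind (e₀ : κ) (c : Bool) :
    ∑ η : κ → Bool, (∏ j, wB q (η j)) * (if η e₀ = c then (1:ℝ) else 0) = wB q c := by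
  have key : ∀ η : κ → Bool, (∏ j, wB q (η j)) * (if η e₀ = c then (1:ℝ) else 0)
      = ∏ j, (wB q (η j) * (if j = e₀ then (if η j = c then (1:ℝ) else 0) else 1)) := by
    intro η
    rw [Finset.prod_mul_distrib, Finset.prod_ite_eq' Finset.univ e₀
      (fun j => if η j = c then (1:ℝ) else 0), if_pos (Finset.mem_univ _)]
  rw [Finset.sum_congr rfl fun η _ => key η,
    prodsum (fun j b => wB q b * (if j = e₀ then (if b = c then (1:ℝ) else 0) else 1))]
  have hfac : ∀ j : κ, (wB q true * (if j = e₀ then (if true = c then (1:ℝ) else 0) else 1)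
      + wB q false * (if j = e₀ then (if false = c then (1:ℝ) else 0) else 1))
      = if j = e₀ then wB q c else 1 := by
    intro j
    by_cases hj : j = e₀
    · cases c <;> simp [hj, wB]
    · simp [hj, wB]
  rw [Finset.prod_congr rfl fun j _ => hfac j, Finset.prod_ite_eq' Finset.univ e₀
    (fun _ => wB q c), if_pos (Finset.mem_univ _)]

lemma onecoord (e₀ : κ) (g : Bool → ℝ) :
    ∑ η : κ → Bool, (∏ j, wB q (η j)) * g (η e₀)
      = q * g true + (1-q) * g false := by
  have key : ∀ η : κ → Bool, (∏ j, wB q (η j)) * g (η e₀)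
      = (∏ j, wB q (η j)) * (if η e₀ = true then (1:ℝ) else 0) * g true
        + (∏ j, wB q (η j)) * (if η e₀ = false then (1:ℝ) else 0) * g false := by
    intro η; cases hb : η e₀ <;> simp [hb]
  rw [Finset.sum_congr rfl fun η _ => key η, Finset.sum_add_distrib,
    ← Finset.sum_mul, ← Finset.sum_mul, onecoord_ind, onecoord_ind]
  simp [wB]

def boolFunEquiv (β : Type*) [Fintype β] [DecidableEq β] : Finset β ≃ (β → Bool) where
  toFun S := fun j => decide (j ∈ S)
  invFun η := Finset.univ.filter (fun j => η j = true)
  left_inv S := by ext j; simp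
  right_inv η := by
    funext j
    by_cases h : η j = true
    · simp [h]
    · simp only [Bool.not_eq_true] at h
      simp [h]

lemma wB_finset {β : Type*} [Fintype β] [DecidableEq β] (S : Finset β) :
    (∏ j : β, wB q (decide (j ∈ S))) = q ^ S.card * (1-q) ^ (Fintype.card β - S.card) := by
  have h1 : ∀ j : β, wB q (decide (j ∈ S)) = if j ∈ S then q else 1-q := by
    intro j
    by_cases h : j ∈ S <;> simp [wB, h]
  rw [Finset.prod_congr rfl fun j _ => h1 j, Finset.prod_ite, Finset.prod_const,
    Finset.prod_const]
  congr 1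
  · congr 1
    rw [Finset.filter_mem_eq_inter, Finset.univ_inter]
  · congr 1
    have : Finset.filter (fun j => j ∉ S) Finset.univ = Finset.univ \ S := by
      ext j; simp
    rw [this, Finset.card_sdiff_of_subset (Finset.subset_univ S), Finset.card_univ]

lemma binom_univ {β : Type*} [Fintype β] [DecidableEq β] (g : ℕ → ℝ) :
    ∑ η : β → Bool, (∏ j, wB q (η j)) * g ((Finset.univ.filter (fun j => η j = true)).card)
      = ∑ c ∈ Finset.range (Fintype.card β + 1),
          ((Fintype.card β).choose c : ℝ) * q^c * (1-q)^(Fintype.card β - c) * g c := by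
  rw [← Equiv.sum_comp (boolFunEquiv β)
    (fun η => (∏ j, wB q (η j)) * g ((Finset.univ.filter (fun j => η j = true)).card))]
  have h1 : ∀ S : Finset β,
      (∏ j, wB q ((boolFunEquiv β) S j)) * g ((Finset.univ.filter
          (fun j => (boolFunEquiv β) S j = true)).card)
      = q ^ S.card * (1-q) ^ (Fintype.card β - S.card) * g S.card := by
    intro S
    have h2 : (Finset.univ.filter (fun j => (boolFunEquiv β) S j = true)) = S := by
      ext j; simp [boolFunEquiv]
    rw [h2, show (∏ j, wB q ((boolFunEquiv β) S j)) = q ^ S.card * (1-q) ^ (Fintype.card β - S.card)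
      from wB_finset S]
  rw [Finset.sum_congr rfl fun S _ => h1 S]
  have h3 := Finset.sum_powerset_apply_card
    (fun m => q ^ m * (1-q) ^ (Fintype.card β - m) * g m) (x := (Finset.univ : Finset β))
  rw [Finset.powerset_univ, Finset.card_univ] at h3
  rw [h3]
  apply Finset.sum_congr rfl
  intro c _
  rw [nsmul_eq_mul]
  ring

lemma card_filter_trans (p : κ → Prop) [DecidablePred p] (η₁ : {x // p x} → Bool)
    (η₂ : {x // ¬ p x} → Bool) :
    ((Finset.univ.filter p).filter (fun j =>
        (Equiv.piEquivPiSubtypeProd p (fun _ => Bool)).symm (η₁, η₂) j = true)).card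
      = (Finset.univ.filter (fun j : {x // p x} => η₁ j = true)).card := by
  rw [eq_comm]
  apply Finset.card_bij (fun j _ => j.val)
  · intro j hj
    rw [Finset.mem_filter] at hj
    rw [Finset.mem_filter, Finset.mem_filter]
    refine ⟨⟨Finset.mem_univ _, j.2⟩, ?_⟩
    rw [Equiv.piEquivPiSubtypeProd_symm_apply, dif_pos j.2, Subtype.coe_eta]
    exact hj.2
  · intro j₁ _ j₂ _ h
    exact Subtype.ext h
  · intro x hx
    rw [Finset.mem_filter, Finset.mem_filter] at hx
    refine ⟨⟨x, hx.1.2⟩, ?_, rfl⟩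
    rw [Finset.mem_filter]
    refine ⟨Finset.mem_univ _, ?_⟩
    rw [Equiv.piEquivPiSubtypeProd_symm_apply, dif_pos] at hx
    exact hx.2

lemma master (p : κ → Prop) [DecidablePred p] (eu : κ) (heu : ¬ p eu) (f : ℕ → Bool → ℝ) :
    ∑ η : κ → Bool, (∏ j, wB q (η j))
        * f (((Finset.univ.filter p).filter (fun j => η j = true)).card) (η eu)
      = ∑ c ∈ Finset.range ((Finset.univ.filter p).card + 1),
          (((Finset.univ.filter p).card).choose c : ℝ) * q^c
            * (1-q)^((Finset.univ.filter p).card - c)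
            * (q * f c true + (1-q) * f c false) := by
  rw [split_sum p]
  have h1 : ∀ (η₁ : {x // p x} → Bool) (η₂ : {x // ¬ p x} → Bool),
      (∏ j, wB q ((Equiv.piEquivPiSubtypeProd p (fun _ => Bool)).symm (η₁, η₂) j))
        * f (((Finset.univ.filter p).filter (fun j => (Equiv.piEquivPiSubtypeProd p
              (fun _ => Bool)).symm (η₁, η₂) j = true)).card)
            ((Equiv.piEquivPiSubtypeProd p (fun _ => Bool)).symm (η₁, η₂) eu)
      = (∏ j, wB q (η₁ j)) * ((∏ j, wB q (η₂ j)) *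
          f ((Finset.univ.filter (fun j : {x // p x} => η₁ j = true)).card) (η₂ ⟨eu, heu⟩)) := by
    intro η₁ η₂
    rw [wB_split, card_filter_trans, Equiv.piEquivPiSubtypeProd_symm_apply, dif_neg heu,
      mul_assoc]
  rw [Finset.sum_congr rfl fun η₁ _ => Finset.sum_congr rfl fun η₂ _ => h1 η₁ η₂]
  have h2 : ∀ η₁ : {x // p x} → Bool,
      (∑ η₂ : {x // ¬ p x} → Bool, (∏ j, wB q (η₁ j)) * ((∏ j, wB q (η₂ j)) *
          f ((Finset.univ.filter (fun j : {x // p x} => η₁ j = true)).card) (η₂ ⟨eu, heu⟩)))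
      = (∏ j, wB q (η₁ j)) *
          (q * f ((Finset.univ.filter (fun j : {x // p x} => η₁ j = true)).card) true
           + (1-q) * f ((Finset.univ.filter (fun j : {x // p x} => η₁ j = true)).card) false) := by
    intro η₁
    rw [← Finset.mul_sum]
    congr 1
    exact onecoord (q := q) (⟨eu, heu⟩ : {x // ¬ p x})
      (f ((Finset.univ.filter (fun j : {x // p x} => η₁ j = true)).card))
  rw [Finset.sum_congr rfl fun η₁ _ => h2 η₁]
  rw [binom_univ (β := {x // p x}) (q := q) (fun c => q * f c true + (1-q) * f c false)]
  rw [Fintype.card_subtype]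

end Sums
end BP

namespace BP
section Edge
variable {n : ℕ} (v : Fin n)

def edgeTo (u : Fin n) : {e : Sym2 (Fin n) // v ∈ e} := ⟨s(u, v), Sym2.mem_mk_right u v⟩

lemma edgeTo_inj {u u' : Fin n} (hu : u ≠ v) (h : edgeTo v u = edgeTo v u') : u = u' := by
  have h2 := congrArg Subtype.val h
  simp only [edgeTo] at h2
  rw [Sym2.eq_iff] at h2
  rcases h2 with ⟨h1, _⟩ | ⟨h1, h2⟩
  · exact h1
  · exact absurd h1 hu

def edgePred (S : Finset (Fin n)) : {e : Sym2 (Fin n) // v ∈ e} → Prop :=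
  fun c => c.val ∈ S.image (fun z => s(z, v))

instance (S : Finset (Fin n)) : DecidablePred (edgePred v S) := by
  unfold edgePred; infer_instance

lemma card_edgePred (S : Finset (Fin n)) (hvS : v ∉ S) :
    (Finset.univ.filter (edgePred v S)).card = S.card := by
  rw [eq_comm]
  apply Finset.card_bij (fun u (_ : u ∈ S) => edgeTo v u)
  · intro u hu
    rw [Finset.mem_filter]
    exact ⟨Finset.mem_univ _, Finset.mem_image_of_mem _ hu⟩
  · intro u1 h1 u2 h2 h
    exact edgeTo_inj v (fun hh => hvS (hh ▸ h1)) h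
  · intro c hc
    rw [Finset.mem_filter] at hc
    obtain ⟨z, hz, hze⟩ := Finset.mem_image.mp hc.2
    exact ⟨z, hz, Subtype.ext hze⟩

lemma nbr_filter_eq (S : Finset (Fin n)) (hvS : v ∉ S) (ω' : Sym2 (Fin n) → Bool)
    (η : {e : Sym2 (Fin n) // v ∈ e} → Bool)
    (hagree : ∀ u : Fin n, ω' s(u,v) = η (edgeTo v u)) :
    nbrCount ω' S v
      = ((Finset.univ.filter (edgePred v S)).filter (fun c => η c = true)).card := by
  rw [nbrCount]
  apply Finset.card_bij (fun u (_ : u ∈ S.filter (fun u => u ≠ v ∧ ω' s(u,v) = true)) =>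
    edgeTo v u)
  · intro u hu
    rw [Finset.mem_filter] at hu
    rw [Finset.mem_filter, Finset.mem_filter]
    refine ⟨⟨Finset.mem_univ _, Finset.mem_image_of_mem _ hu.1⟩, ?_⟩
    rw [← hagree u]
    exact hu.2.2
  · intro u1 h1 u2 h2 h
    rw [Finset.mem_filter] at h1
    exact edgeTo_inj v h1.2.1 h
  · intro c hc
    rw [Finset.mem_filter, Finset.mem_filter] at hc
    obtain ⟨z, hz, hze⟩ := Finset.mem_image.mp hc.1.2
    have hzv : z ≠ v := fun h => hvS (h ▸ hz)
    refine ⟨z, ?_, Subtype.ext hze⟩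
    rw [Finset.mem_filter]
    refine ⟨hz, hzv, ?_⟩
    rw [hagree z, show edgeTo v z = c from Subtype.ext hze]
    exact hc.2
end Edge

section Meas
open MeasureTheory
variable {n : ℕ} {q : ℝ}

instance gnp_prob (n : ℕ) (q : ℝ) : IsProbabilityMeasure (gnp n q) := by
  constructor
  rw [gnp, ← Set.pi_univ Set.univ, Measure.pi_pi]
  simp only [measure_univ, Finset.prod_const_one]

lemma meas_all {α : Type*} [MeasurableSpace α] [MeasurableSingletonClass α] [Finite α]
    (s : Set α) : MeasurableSet s := s.toFinite.measurableSet

lemma bernoulli_singleton (hq0 : 0 ≤ q) (hq1 : q ≤ 1) (b : Bool) :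
    (bernoulliMeasure q {b}).toReal = wB q b := by
  rw [bernoulliMeasure, PMF.toMeasure_apply_singleton _ _ (measurableSet_singleton _)]
  have hmin : min q.toNNReal 1 = q.toNNReal :=
    min_eq_left (Real.toNNReal_le_one.mpr hq1)
  rw [PMF.bernoulli_apply]
  cases b
  · show (1 - ((min q.toNNReal 1 : NNReal) : ENNReal)).toReal = wB q false
    rw [hmin, ENNReal.toReal_sub_of_le (ENNReal.coe_le_one_iff.mpr (Real.toNNReal_le_one.mpr hq1))
      ENNReal.one_ne_top, ENNReal.toReal_one, ENNReal.coe_toReal, Real.coe_toNNReal _ hq0]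
    rfl
  · show ((min q.toNNReal 1 : NNReal) : ENNReal).toReal = wB q true
    rw [hmin, ENNReal.coe_toReal, Real.coe_toNNReal _ hq0]
    rfl

lemma gnp_singleton (hq0 : 0 ≤ q) (hq1 : q ≤ 1) (ω : Sym2 (Fin n) → Bool) :
    ((gnp n q) {ω}).toReal = ∏ e, wB q (ω e) := by
  rw [gnp, ← Set.univ_pi_singleton, Measure.pi_pi, ENNReal.toReal_prod]
  exact Finset.prod_congr rfl fun e _ => bernoulli_singleton hq0 hq1 (ω e)

lemma integral_gnp (hq0 : 0 ≤ q) (hq1 : q ≤ 1) (f : (Sym2 (Fin n) → Bool) → ℝ) :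
    ∫ ω, f ω ∂(gnp n q) = ∑ ω, (∏ e, wB q (ω e)) * f ω := by
  rw [integral_fintype]
  exact Finset.sum_congr rfl fun ω _ => by
    rw [measureReal_def, gnp_singleton hq0 hq1, smul_eq_mul]
  exact Integrable.of_finite
end Meas

section Alg
variable {q : ℝ}

lemma sum_if_lt (r t : ℕ) (hr : 1 ≤ r) (ht : 1 ≤ t) :
    ∑ c ∈ Finset.range ((t-1)+1),
      (if c < r then ((t-1).choose c : ℝ) * q^c * (1-q)^((t-1)-c) else 0)
      = 1 - binomTail r (t-1) q := by
  rw [← Finset.sum_filter, ← bsum_lt]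
  rcases le_or_gt r ((t-1)+1) with h | h
  · apply Finset.sum_congr
    · ext c
      simp only [Finset.mem_filter, Finset.mem_range]
      omega
    · intro c _; rfl
  · rw [Finset.filter_true_of_mem (fun c hc => by
      rw [Finset.mem_range] at hc; omega)]
    have hsplit := Finset.sum_Ico_consecutive
      (fun c => ((t-1).choose c:ℝ)*q^c*(1-q)^((t-1)-c)) (Nat.zero_le ((t-1)+1)) (le_of_lt h)
    have hz : ∑ c ∈ Finset.Ico ((t-1)+1) r, ((t-1).choose c:ℝ)*q^c*(1-q)^((t-1)-c) = 0 := by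
      apply Finset.sum_eq_zero
      intro c hc
      rw [Finset.mem_Ico] at hc
      rw [Nat.choose_eq_zero_of_lt (by omega)]
      simp
    simp only [Finset.range_eq_Ico]
    linarith

lemma sum_if_eq (r t : ℕ) (hr : 1 ≤ r) (ht : 1 ≤ t) :
    ∑ c ∈ Finset.range ((t-1)+1),
      (if c = r - 1 then ((t-1).choose c : ℝ) * q^c * (1-q)^((t-1)-c) else 0)
      = ((t-1).choose (r-1) : ℝ) * q^(r-1) * (1-q)^((t-1)-(r-1)) := by
  rw [Finset.sum_ite_eq' (Finset.range ((t-1)+1)) (r-1)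
    (fun c => ((t-1).choose c : ℝ) * q^c * (1-q)^((t-1)-c))]
  split
  · rfl
  · rename_i hmem
    rw [Finset.mem_range] at hmem
    rw [Nat.choose_eq_zero_of_lt (by omega)]
    simp

lemma alg_zero (hq0 : 0 < q) (hq1 : q < 1) (r t : ℕ) (hr : 2 ≤ r) (ht : 1 ≤ t) (K : ℝ) :
    ∑ c ∈ Finset.range ((t-1) + 1),
        ((t-1).choose c : ℝ) * q^c * (1-q)^((t-1) - c)
          * (q * (if c < r then K * Dval r t q c true else 0)
             + (1-q) * (if c < r then K * Dval r t q c false else 0)) = 0 := by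
  have h1 : (1:ℝ) - binomTail r t q ≠ 0 :=
    ne_of_gt (one_sub_binomTail_pos hq0 hq1 (by omega) t)
  have h2 : (1:ℝ) - binomTail r (t-1) q ≠ 0 :=
    ne_of_gt (one_sub_binomTail_pos hq0 hq1 (by omega) (t-1))
  have key : ∀ c, ((t-1).choose c : ℝ) * q^c * (1-q)^((t-1) - c)
        * (q * (if c < r then K * Dval r t q c true else 0)
           + (1-q) * (if c < r then K * Dval r t q c false else 0))
      = K * ((if c < r then ((t-1).choose c : ℝ) * q^c * (1-q)^((t-1)-c) else 0)
              * ((0 - binomTail r t q)/(1 - binomTail r t q)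
                 + binomTail r (t-1) q/(1 - binomTail r (t-1) q))
            + (if c = r - 1 then ((t-1).choose c : ℝ) * q^c * (1-q)^((t-1)-c) else 0)
              * (q/(1 - binomTail r t q))) := by
    intro c
    by_cases hc : c < r
    · rw [if_pos hc, if_pos hc, if_pos hc, Dval, Dval]
      by_cases hc1 : c = r-1
      · rw [if_pos ⟨hc1, rfl⟩, if_neg (by simp [hc1]), if_pos hc1]
        field_simp
        ring
      · rw [if_neg (fun h => hc1 h.1), if_neg (fun h => hc1 h.1), if_neg hc1]
        field_simp
        ring
    · rw [if_neg hc, if_neg hc, if_neg hc, if_neg (show ¬ c = r-1 by omega)]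
      ring
  rw [Finset.sum_congr rfl fun c _ => key c]
  rw [← Finset.mul_sum, Finset.sum_add_distrib, ← Finset.sum_mul, ← Finset.sum_mul]
  rw [sum_if_lt r t (by omega) ht, sum_if_eq r t (by omega) ht]
  have hstep := binomTail_succ (q := q) (show 1 ≤ r by omega) (t-1)
  rw [show (t-1)+1 = t by omega] at hstep
  have hq' : q^(r-1) * q = q^r := by
    rw [← pow_succ]
    congr 1
    omega
  have hnum : ((t-1).choose (r-1) : ℝ) * q^(r-1) * (1-q)^((t-1)-(r-1)) * q
      = binomTail r t q - binomTail r (t-1) q := by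
    linear_combination (-1:ℝ) * hstep + (((t-1).choose (r-1) : ℝ) * (1-q)^((t-1)-(r-1))) * hq'
  have hPB : ((t-1).choose (r-1) : ℝ) * q^(r-1) * (1-q)^((t-1)-(r-1))
        * (q/(1 - binomTail r t q))
      = (binomTail r t q - binomTail r (t-1) q) / (1 - binomTail r t q) := by
    rw [show ((t-1).choose (r-1) : ℝ) * q^(r-1) * (1-q)^((t-1)-(r-1)) * (q/(1 - binomTail r t q)) = (((t-1).choose (r-1) : ℝ) * q^(r-1) * (1-q)^((t-1)-(r-1)) * q)/(1 - binomTail r t q) from by ring, hnum]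
  rw [hPB]
  field_simp
  ring
end Alg
end BP

namespace BP

lemma alg_zero' {q : ℝ} (hq0 : 0 < q) (hq1 : q < 1) (r t : ℕ) (hr : 2 ≤ r) (ht : 1 ≤ t)
    (f : ℕ → Bool → ℝ) (hf : ∀ c b, f c b = if c < r then Dval r t q c b else 0) :
    ∑ c ∈ Finset.range ((t-1) + 1),
        ((t-1).choose c : ℝ) * q^c * (1-q)^((t-1) - c)
          * (q * f c true + (1-q) * f c false) = 0 := by
  have h := alg_zero hq0 hq1 r t hr ht 1
  simp only [one_mul] at h
  rw [← h]
  exact Finset.sum_congr rfl fun c _ => by rw [hf, hf]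

lemma grand_zero {n : ℕ} (r a : ℕ) (q : ℝ) (hq0 : 0 < q) (hq1 : q < 1) (hr : 2 ≤ r)
    (ha1 : 1 ≤ a) (han : a < n) {k : ℕ} (hk1 : 1 ≤ k)
    (s : Set (Sym2 (Fin n) → Bool))
    (hs : MeasurableSet[⨆ j ∈ Set.Iic (k-1), MeasurableSpace.comap (expMseq n r a q j)
      (inferInstance : MeasurableSpace ℝ)] s) :
    ∑ ω : Sym2 (Fin n) → Bool, (∏ e, wB q (ω e)) *
      (Set.indicator s (fun ω' => expMseq n r a q k ω' - expMseq n r a q (k-1) ω') ω) = 0 := by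
  classical
  have hd : 1 ≤ n - a := by omega
  set t := (k-1)/(n-a) + 1 with htdef
  set i := (k-1) % (n-a) + 1 with hidef
  have ht : 1 ≤ t := by rw [htdef]; exact Nat.le_add_left 1 _
  have himod : (k-1) % (n-a) < n - a := Nat.mod_lt _ (by omega)
  have hi1 : 1 ≤ i := by omega
  have hin : a + i ≤ n := by omega
  have hvlt : a + i - 1 < n := by omega
  set v : Fin n := ⟨a + i - 1, hvlt⟩ with hv
  have hvv : v.val = a + i - 1 := rfl
  have hva : a ≤ v.val := by rw [hvv]; omega
  have hr1 : 1 ≤ r := by omega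
  have hmem : ∀ ω, nbrCount ω (expZ r a (kill v ω) (t-1)) v < r →
      (ω ∈ s ↔ kill v ω ∈ s) := by
    intro ω hc
    refine mem_iff_of_inv (P := fun ω' => nbrCount ω' (expZ r a (kill v ω') (t-1)) v < r)
      (fun j hj ω' hc' => ?_) hs ω hc
    exact expMseq_eq_of_H r a ω' hr1 hva (H_of_cnt r a ω' hc') ht q hk1 han htdef hidef hvv j hj
  have hpt : ∀ ω : Sym2 (Fin n) → Bool,
      Set.indicator s (fun ω' => expMseq n r a q k ω' - expMseq n r a q (k-1) ω') ω
      = (if kill v ω ∈ s then (1:ℝ) else 0) *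
        (if t ≤ expT r a (kill v ω) ∧ nbrCount ω (expZ r a (kill v ω) (t-1)) v < r
         then Dval r t q (nbrCount ω (expZ r a (kill v ω) (t-1)) v)
              (ω s(uNext r a t (kill v ω) v, v)) else 0) := by
    intro ω
    have hΔ : expMseq n r a q k ω - expMseq n r a q (k-1) ω
        = Dterm r a q t i ω - Dterm r a q (t-1) i ω :=
      diff_main r a ω hk1 han htdef hidef
    have hkey := pointwise_key r a ω hq0 hq1 hr ht hi1 hin hvv
    rw [Set.indicator_apply]
    by_cases hcond : t ≤ expT r a (kill v ω)
        ∧ nbrCount ω (expZ r a (kill v ω) (t-1)) v < r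
    · have hmem' := hmem ω hcond.2
      by_cases hωs : ω ∈ s
      · rw [if_pos hωs, if_pos (hmem'.mp hωs), one_mul, hΔ, hkey]
      · rw [if_neg hωs, if_neg (fun h => hωs (hmem'.mpr h)), zero_mul]
    · rw [if_neg hcond] at hkey
      rw [if_neg hcond, mul_zero]
      split
      · rw [hΔ, hkey]
      · rfl
  rw [Finset.sum_congr rfl fun ω _ => by rw [hpt ω]]
  rw [← Equiv.sum_comp (Equiv.piEquivPiSubtypeProd (fun e : Sym2 (Fin n) => v ∈ e)
    (fun _ => Bool)).symm, Fintype.sum_prod_type_right]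
  refine Finset.sum_eq_zero fun ρ _ => ?_
  set E := Equiv.piEquivPiSubtypeProd (fun e : Sym2 (Fin n) => v ∈ e)
    (fun _ => Bool) with hE
  set ω₀ : Sym2 (Fin n) → Bool := E.symm (fun _ => false, ρ) with hω₀
  have hkill : ∀ η : {e : Sym2 (Fin n) // v ∈ e} → Bool, kill v (E.symm (η, ρ)) = ω₀ := by
    intro η
    funext e
    show (if v ∈ e then false else E.symm (η, ρ) e) = E.symm (fun _ => false, ρ) e
    rw [hE, Equiv.piEquivPiSubtypeProd_symm_apply, Equiv.piEquivPiSubtypeProd_symm_apply]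
    by_cases h : v ∈ e
    · rw [if_pos h, dif_pos h]
    · rw [if_neg h, dif_neg h, dif_neg h]
  have hagree : ∀ (η : {e : Sym2 (Fin n) // v ∈ e} → Bool) (u : Fin n),
      (E.symm (η, ρ)) s(u, v) = η (edgeTo v u) := by
    intro η u
    rw [hE, Equiv.piEquivPiSubtypeProd_symm_apply, dif_pos (Sym2.mem_mk_right u v)]
    rfl
  by_cases hT : t ≤ expT r a ω₀
  · have hω₀k : kill v ω₀ = ω₀ := hkill (fun _ => false)
    have hvZ : v ∉ expZ r a ω₀ (t-1) := by
      have h := not_mem_expZ_kill r a ω₀ hr1 hva (t-1)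
      rwa [hω₀k] at h
    have hnA : v ∉ expA r a ω₀ (t-1) := by
      have h := not_mem_expA_kill r a ω₀ hr1 hva (t-1)
      rwa [hω₀k] at h
    have hTne := (le_expT_iff r a ω₀ t).mp hT (t-1) (by omega)
    have hne : ((expA r a ω₀ (t-1)) \ expZ r a ω₀ (t-1)).Nonempty :=
      sdiff_nonempty_of_ne r a ω₀ hTne
    have hu_def : uNext r a t ω₀ v
        = ((expA r a ω₀ (t-1)) \ expZ r a ω₀ (t-1)).min' hne := dif_pos hne
    have humem0 := Finset.min'_mem _ hne
    rw [← hu_def] at humem0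
    have humem := Finset.mem_sdiff.mp humem0
    have hueZ : uNext r a t ω₀ v ∉ expZ r a ω₀ (t-1) := humem.2
    have hcard : (Finset.univ.filter (edgePred v (expZ r a ω₀ (t-1)))).card = t - 1 := by
      rw [card_edgePred v _ hvZ, card_expZ r a ω₀ (by omega)]
    have heu : ¬ edgePred v (expZ r a ω₀ (t-1)) (edgeTo v (uNext r a t ω₀ v)) := by
      intro hmem2
      obtain ⟨z, hz, hze⟩ := Finset.mem_image.mp hmem2
      have hzv : z ≠ v := fun h => hvZ (h ▸ hz)
      have hzu : z = uNext r a t ω₀ v := edgeTo_inj v hzv (Subtype.ext hze)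
      exact hueZ (hzu ▸ hz)
    have hsummand : ∀ η : {e : Sym2 (Fin n) // v ∈ e} → Bool,
        (∏ e, wB q ((E.symm (η, ρ)) e)) *
          ((if kill v (E.symm (η, ρ)) ∈ s then (1:ℝ) else 0) *
           (if t ≤ expT r a (kill v (E.symm (η, ρ)))
              ∧ nbrCount (E.symm (η, ρ)) (expZ r a (kill v (E.symm (η, ρ))) (t-1)) v < r
            then Dval r t q (nbrCount (E.symm (η, ρ))
                (expZ r a (kill v (E.symm (η, ρ))) (t-1)) v)
              ((E.symm (η, ρ)) s(uNext r a t (kill v (E.symm (η, ρ))) v, v)) else 0))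
        = ((∏ e2, wB q (ρ e2)) * (if ω₀ ∈ s then (1:ℝ) else 0)) *
          ((∏ e1, wB q (η e1)) *
            (if ((Finset.univ.filter (edgePred v (expZ r a ω₀ (t-1)))).filter
                  (fun c => η c = true)).card < r
             then Dval r t q ((Finset.univ.filter (edgePred v (expZ r a ω₀ (t-1)))).filter
                  (fun c => η c = true)).card (η (edgeTo v (uNext r a t ω₀ v)))
             else 0)) := by
      intro η
      rw [hkill η, wB_split,
        nbr_filter_eq v _ hvZ (E.symm (η, ρ)) η (hagree η),
        hagree η (uNext r a t ω₀ v),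
        if_congr (and_iff_right hT) rfl rfl]
      ring
    rw [Finset.sum_congr rfl fun η _ => hsummand η, ← Finset.mul_sum]
    rw [master (edgePred v (expZ r a ω₀ (t-1))) (edgeTo v (uNext r a t ω₀ v)) heu
      (fun c b => if c < r then Dval r t q c b else 0)]
    rw [hcard]
    rw [alg_zero' hq0 hq1 r t hr ht _ (fun c b => rfl), mul_zero]
  · refine Finset.sum_eq_zero fun η _ => ?_
    rw [hkill η, if_neg (show ¬ (t ≤ expT r a ω₀
        ∧ nbrCount (E.symm (η, ρ)) (expZ r a ω₀ (t-1)) v < r) from fun h => hT h.1),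
      mul_zero, mul_zero]
end BP

/-- The sequence of random variables `M(0,n-a), M(1,1), …, M(n,n-a)` (indexed linearly by
`k = 0, 1, …, n(n-a)` via `expMseq`) forms a martingale with respect to the filtration
`F(t,i)` generated by the variables up to round `(t,i)`: each `M` is measurable with
respect to its own `σ`-algebra, integrable, and satisfies the conditional-expectation
martingale identity. -/
theorem exploration_martingale (n r a : ℕ) (hr : 2 ≤ r) (ha1 : 1 ≤ a) (han : a ≤ n)
    (q : ℝ) (hq : q ∈ Set.Ioo (0 : ℝ) 1)
    (F : ℕ → MeasurableSpace (Sym2 (Fin n) → Bool))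
    (hF : ∀ k, F k = ⨆ j ∈ Set.Iic k, MeasurableSpace.comap (expMseq n r a q j)
      (inferInstance : MeasurableSpace ℝ)) :
    (∀ k, k ≤ n * (n - a) → Measurable[F k] (expMseq n r a q k)) ∧
    (∀ k, k ≤ n * (n - a) → Integrable (expMseq n r a q k) (gnp n q)) ∧
    (∀ k, 1 ≤ k → k ≤ n * (n - a) →
      condExp (F (k - 1)) (gnp n q) (expMseq n r a q k) =ᵐ[gnp n q]
        expMseq n r a q (k - 1)) := by
  classical
  obtain ⟨hq0, hq1⟩ := hq
  have part1 : ∀ k, Measurable[F k] (expMseq n r a q k) := by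
    intro k
    refine measurable_iff_comap_le.mpr ?_
    rw [hF k]
    exact le_iSup₂ (f := fun j (_ : j ∈ Set.Iic k) =>
      MeasurableSpace.comap (expMseq n r a q j) (inferInstance : MeasurableSpace ℝ))
      k (Set.mem_Iic.mpr le_rfl)
  have part2 : ∀ k, Integrable (expMseq n r a q k) (gnp n q) := fun k =>
    Integrable.of_finite
  refine ⟨fun k _ => part1 k, fun k _ => part2 k, ?_⟩
  intro k hk1 hk2
  have han' : a < n := by
    rcases Nat.lt_or_ge a n with h | h
    · exact h
    · exfalso
      have h0 : n - a = 0 := by omega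
      rw [h0, Nat.mul_zero] at hk2
      omega
  have hm : F (k-1) ≤ (inferInstance : MeasurableSpace (Sym2 (Fin n) → Bool)) :=
    fun u _ => BP.meas_all u
  haveI hfin : IsFiniteMeasure ((gnp n q).trim hm) := isFiniteMeasure_trim hm
  have key := MeasureTheory.ae_eq_condExp_of_forall_setIntegral_eq (μ := gnp n q) hm
    (part2 k)
    (fun u _ _ => (part2 (k-1)).integrableOn)
    (fun u hu _ => ?_)
    ((part1 (k-1)).stronglyMeasurable.aestronglyMeasurable)
  · exact key.symm
  · -- set-integral equality
    have hmu : MeasurableSet u := BP.meas_all u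
    have hsub : ∫ x in u, (expMseq n r a q k x - expMseq n r a q (k-1) x) ∂(gnp n q)
        = (∫ x in u, expMseq n r a q k x ∂(gnp n q))
          - ∫ x in u, expMseq n r a q (k-1) x ∂(gnp n q) :=
      integral_sub ((part2 k).integrableOn) ((part2 (k-1)).integrableOn)
    have hzero : ∫ x in u, (expMseq n r a q k x - expMseq n r a q (k-1) x) ∂(gnp n q) = 0 := by
      rw [← integral_indicator hmu, BP.integral_gnp (le_of_lt hq0) (le_of_lt hq1)]
      exact BP.grand_zero r a q hq0 hq1 hr ha1 han' hk1 u (hF (k-1) ▸ hu)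
    linarith

end
end

section
/- (Lower bound on the survival probability root.) Let ε > 0. Then: (i) for every x with 0 < x < 2ε/(1+2ε), one has exp((1+ε)x) > 1/(1−x); and consequently (ii) the unique solution ρ ∈ (0,1) of 1 − ρ = exp(−(1+ε)ρ) satisfies ρ > 2ε/(1+2ε). -/
/-- Key algebraic inequality covering the closed interval up to the threshold. -/
lemma survival_key (ε x : ℝ) (hε : 0 < ε) (hx : 0 < x) (hle : (1 + 2 * ε) * x ≤ 2 * ε) :
    (1 - x)⁻¹ < Real.exp ((1 + ε) * x) := by
  have hu : 0 < 1 - x := by nlinarith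
  have ht : 0 ≤ (1 + ε) * x := by positivity
  have hq := Real.quadratic_le_exp_of_nonneg ht
  rw [inv_lt_iff_one_lt_mul₀ hu]
  have hP : 0 < ε - (1 + ε) * x + (1 + ε) ^ 2 * x * (1 - x) / 2 := by
    rcases lt_or_eq_of_le hle with hc | hc
    · nlinarith [mul_nonneg hx.le (sq_nonneg ((1 + ε) * x - ε)), mul_pos hx hu]
    · nlinarith [mul_pos (mul_pos hx hx) hx, mul_pos hx hu, sq_nonneg x]
  have key : 1 < (1 + (1 + ε) * x + ((1 + ε) * x) ^ 2 / 2) * (1 - x) := by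
    nlinarith [mul_pos hx hP]
  calc 1 < (1 + (1 + ε) * x + ((1 + ε) * x) ^ 2 / 2) * (1 - x) := key
    _ ≤ Real.exp ((1 + ε) * x) * (1 - x) := by
        apply mul_le_mul_of_nonneg_right hq hu.le

/-- **Lower bound on the survival probability root.** Let `ε > 0`. Then (i) for every `x`
with `0 < x < 2ε/(1+2ε)` one has `exp((1+ε)x) > 1/(1-x)`, and consequently (ii) the
unique solution `ρ ∈ (0,1)` of `1 - ρ = exp(-(1+ε)ρ)` satisfies `ρ > 2ε/(1+2ε)`. -/
theorem survival_root_lower_bound (ε : ℝ) (hε : 0 < ε) :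
    (∀ x : ℝ, 0 < x → x < 2 * ε / (1 + 2 * ε) → (1 - x)⁻¹ < Real.exp ((1 + ε) * x)) ∧
    ∀ ρ : ℝ, ρ ∈ Set.Ioo (0 : ℝ) 1 → 1 - ρ = Real.exp (-(1 + ε) * ρ) →
      2 * ε / (1 + 2 * ε) < ρ := by
  have hden : 0 < 1 + 2 * ε := by linarith
  constructor
  · intro x hx hx'
    apply survival_key ε x hε hx
    rw [lt_div_iff₀ hden] at hx'
    linarith
  · intro ρ hρ hfix
    by_contra hcon
    push_neg at hcon
    have hle : (1 + 2 * ε) * ρ ≤ 2 * ε := by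
      rw [le_div_iff₀ hden] at hcon; linarith [hcon]
    have h := survival_key ε ρ hε hρ.1 hle
    have hu : 0 < 1 - ρ := by linarith [hρ.2]
    have heq : Real.exp (-(1 + ε) * ρ) = (Real.exp ((1 + ε) * ρ))⁻¹ := by
      rw [← Real.exp_neg]; ring_nf
    rw [heq] at hfix
    have hexp : 0 < Real.exp ((1 + ε) * ρ) := Real.exp_pos _
    rw [inv_lt_iff_one_lt_mul₀ hu] at h
    have : (1 - ρ) * Real.exp ((1 + ε) * ρ) = 1 := by
      rw [hfix]; field_simp
    nlinarith
end
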